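/- arXiv:2401.03832 — 3 statements merged into one kernel-verified Lean document; each statement's English description precedes it below -/
import Mathlib

section
/- Let $d \geq 1$ and let $F \subset \mathbb{R}^d$ be a compact convex set containing a Euclidean ball of radius $1/4$. Then for any unit vector $e \in \mathbb{R}^d$ and any $a \in (0,2]$, the Lebesgue measure of the set difference $(F + ae) \setminus F$ is at least $8^{-d} \theta_{d-1} a$, where $\theta_{d-1}$ is the volume of the unit ball in $\mathbb{R}^{d-1}$ and $F + ae$ denotes the translate of $F$ by the vector $ae$. -/
open MeasureTheory Metric Set

/-- `ubv n` is θ_n, the Lebesgue volume of the unit Euclidean ball in ℝ^n. -/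
noncomputable def ubv (n : ℕ) : ℝ :=
  (volume (Metric.ball (0 : EuclideanSpace ℝ (Fin n)) 1)).toReal

/-- Monotonicity of the volume of `(F + s e) \ F` in `s`, for convex `F`. -/
lemma step_mono (d : ℕ) (F : Set (EuclideanSpace ℝ (Fin d))) (hFconv : Convex ℝ F)
    (e : EuclideanSpace ℝ (Fin d)) {s a : ℝ} (hs : 0 < s) (hsa : s ≤ a) :
    volume (((fun x => x + s • e) '' F) \ F) ≤ volume (((fun x => x + a • e) '' F) \ F) := by
  have ha : 0 < a := hs.trans_le hsa
  have key : (fun x => x + ((a - s) • e)) '' (((fun x => x + s • e) '' F) \ F)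
      ⊆ ((fun x => x + a • e) '' F) \ F := by
    rintro _ ⟨z, ⟨⟨x, hxF, rfl⟩, hzF⟩, rfl⟩
    have hxa : x + s • e + (a - s) • e = x + a • e := by
      rw [add_assoc, ← add_smul]; ring_nf
    refine ⟨⟨x, hxF, hxa.symm⟩, fun hmem => hzF ?_⟩
    have hmem' : x + a • e ∈ F := by rw [← hxa]; exact hmem
    have h0 : s / a ≤ 1 := (div_le_one ha).mpr hsa
    have h1 : (1 - s/a) • x + (s/a) • (x + a • e) = x + s • e := by
      rw [smul_add, ← add_assoc, ← add_smul, sub_add_cancel, one_smul, smul_smul,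
        div_mul_cancel₀ _ ha.ne']
    have h2 := hFconv hxF hmem' (a := 1 - s/a) (b := s/a) (by linarith) (by positivity) (by ring)
    rw [h1] at h2
    exact h2
  have himgvol : ∀ (v : EuclideanSpace ℝ (Fin d)) (A : Set (EuclideanSpace ℝ (Fin d))),
      volume ((fun x => x + v) '' A) = volume A := by
    intro v A
    rw [Set.image_add_right, measure_preimage_add_right]
  calc volume (((fun x => x + s • e) '' F) \ F)
      = volume ((fun x => x + (a - s) • e) '' (((fun x => x + s • e) '' F) \ F)) :=
        (himgvol _ _).symm
    _ ≤ _ := measure_mono key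

/-- The main estimate for small translations `a ≤ 1/4`. -/
lemma aux_small (m : ℕ) (F : Set (EuclideanSpace ℝ (Fin (m+1))))
    (hFc : IsCompact F) (hFconv : Convex ℝ F)
    (hFball : ∃ c : EuclideanSpace ℝ (Fin (m+1)), Metric.closedBall c (1/4) ⊆ F)
    (e : EuclideanSpace ℝ (Fin (m+1))) (he : ‖e‖ = 1)
    {a : ℝ} (ha : 0 < a) (ha4 : a ≤ 1/4) :
    ENNReal.ofReal (a * (1/8)^m) * volume (Metric.ball (0 : EuclideanSpace ℝ (Fin m)) 1)
      ≤ volume (((fun x => x + a • e) '' F) \ F) := by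
  classical
  obtain ⟨c, hc⟩ := hFball
  -- an orthonormal basis whose 0-th vector is `e`
  have hcard : Module.finrank ℝ (EuclideanSpace ℝ (Fin (m+1))) = Fintype.card (Fin (m+1)) := by
    simp [finrank_euclideanSpace]
  have horth : Orthonormal ℝ (Set.restrict ({0} : Set (Fin (m+1))) (fun _ => e)) := by
    refine ⟨fun i => he, fun i j hij => absurd (Subtype.ext ?_) hij⟩
    have hi := i.2; have hj := j.2
    simp only [Set.mem_singleton_iff] at hi hj
    rw [hi, hj]
  obtain ⟨b, hb⟩ := horth.exists_orthonormalBasis_extension_of_card_eq hcard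
  have hb0 : b 0 = e := hb 0 rfl
  -- the coordinate map
  set Φ : EuclideanSpace ℝ (Fin (m+1)) → ℝ × (Fin m → ℝ) :=
    fun x => (b.repr x 0, fun j => b.repr x j.succ) with hΦ
  have hΦcomp : Φ = ⇑(MeasurableEquiv.piFinSuccAbove (fun _ : Fin (m+1) => ℝ) 0) ∘
      ⇑(MeasurableEquiv.toLp 2 (Fin (m+1) → ℝ)).symm ∘ ⇑b.repr := by
    funext x
    refine Prod.ext rfl ?_
    funext j
    show b.repr x j.succ = b.repr x ((0 : Fin (m+1)).succAbove j)
    rw [Fin.zero_succAbove]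
  have hΦmp : MeasurePreserving Φ volume volume := by
    rw [hΦcomp]
    exact (volume_preserving_piFinSuccAbove (fun _ : Fin (m+1) => ℝ) 0).comp
      ((EuclideanSpace.volume_preserving_symm_measurableEquiv_toLp (Fin (m+1))).comp
        b.measurePreserving_repr)
  have hΦinj : Function.Injective Φ := by
    rw [hΦcomp]
    exact (MeasurableEquiv.piFinSuccAbove (fun _ : Fin (m+1) => ℝ) 0).injective.comp
      ((MeasurableEquiv.toLp 2 (Fin (m+1) → ℝ)).symm.injective.comp b.repr.injective)
  have hΦadd : ∀ x y, Φ (x + y) = Φ x + Φ y := by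
    intro x y
    simp only [hΦ, map_add]
    rfl
  have hΦsmul : ∀ (r : ℝ) (x : EuclideanSpace ℝ (Fin (m+1))), Φ (r • x) = r • Φ x := by
    intro r x
    simp only [hΦ, _root_.map_smul]
    rfl
  have hΦe : Φ e = ((1 : ℝ), (0 : Fin m → ℝ)) := by
    rw [hΦ, ← hb0]
    refine Prod.ext ?_ ?_
    · simp [OrthonormalBasis.repr_self, EuclideanSpace.single_apply]
    · funext j
      simp [OrthonormalBasis.repr_self, EuclideanSpace.single_apply, Fin.succ_ne_zero]
  have hΦtra : ∀ x, Φ (x + a • e) = Φ x + ((a : ℝ), (0 : Fin m → ℝ)) := by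
    intro x
    rw [hΦadd, hΦsmul, hΦe]
    congr 1
    rw [Prod.smul_mk, smul_eq_mul, mul_one, smul_zero]
  set G : Set (ℝ × (Fin m → ℝ)) := Φ '' F with hG
  have hGconv : Convex ℝ G := hFconv.is_linear_image ⟨hΦadd, hΦsmul⟩
  have hΦcont : Continuous Φ := by
    apply Continuous.prodMk
    · exact (continuous_apply (0 : Fin (m+1))).comp
        ((PiLp.continuous_ofLp 2 _).comp b.repr.continuous)
    · exact continuous_pi fun j => (continuous_apply (j.succ)).comp
        ((PiLp.continuous_ofLp 2 _).comp b.repr.continuous)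
  have hGc : IsCompact G := hFc.image hΦcont
  have hGmeas : MeasurableSet G := hGc.isClosed.measurableSet
  set γ : EuclideanSpace ℝ (Fin (m+1)) := b.repr c with hγ
  -- key membership criterion
  have hmem : ∀ (t : ℝ) (y : Fin m → ℝ),
      (t - γ 0)^2 + ∑ j, (y j - γ j.succ)^2 ≤ (1/4)^2 → (t, y) ∈ G := by
    intro t y hty
    set x : EuclideanSpace ℝ (Fin (m+1)) :=
      b.repr.symm ((WithLp.equiv 2 (Fin (m+1) → ℝ)).symm (Fin.cons (α := fun _ => ℝ) t y)) with hx
    have hrx : ∀ i, b.repr x i = Fin.cons (α := fun _ => ℝ) t y i := by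
      intro i
      rw [hx, LinearIsometryEquiv.apply_symm_apply]
      rfl
    have hsum : ∑ i, (b.repr x i - γ i)^2 = (t - γ 0)^2 + ∑ j, (y j - γ j.succ)^2 := by
      rw [Fin.sum_univ_succ]
      simp [hrx]
    have hxmem : x ∈ Metric.closedBall c (1/4) := by
      rw [mem_closedBall, ← b.repr.dist_map x c, EuclideanSpace.dist_eq]
      rw [show (1/4 : ℝ) = Real.sqrt ((1/4)^2) from by
        rw [Real.sqrt_sq (by norm_num : (0:ℝ) ≤ 1/4)]]
      apply Real.sqrt_le_sqrt
      simp only [Real.dist_eq, sq_abs]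
      rw [hsum]
      exact hty
    refine ⟨x, hc hxmem, ?_⟩
    show (b.repr x 0, fun j => b.repr x j.succ) = (t, y)
    refine Prod.ext ?_ ?_
    · simp [hrx]
    · funext j; simp [hrx]
  -- the shadow set
  set Y : Set (Fin m → ℝ) := {y | ∑ j, (y j - γ j.succ)^2 ≤ (1/8)^2} with hY
  have hYmeas : MeasurableSet Y := by
    apply measurableSet_le _ measurable_const
    exact Finset.measurable_sum _ fun j _ =>
      ((measurable_pi_apply j).sub measurable_const).pow measurable_const
  have hYvol : volume Y
      = ENNReal.ofReal ((1/8)^m) * volume (Metric.ball (0 : EuclideanSpace ℝ (Fin m)) 1) := by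
    have hYeq : Y = ⇑(MeasurableEquiv.toLp 2 (Fin m → ℝ)) ⁻¹'
        (Metric.closedBall ((WithLp.equiv 2 (Fin m → ℝ)).symm (fun j => γ j.succ)) (1/8)) := by
      ext y
      simp only [hY, Set.mem_setOf_eq, Set.mem_preimage, mem_closedBall,
        MeasurableEquiv.coe_toLp]
      rw [EuclideanSpace.dist_eq]
      rw [show (1/8 : ℝ) = Real.sqrt ((1/8)^2) from by
        rw [Real.sqrt_sq (by norm_num : (0:ℝ) ≤ 1/8)]]
      rw [Real.sqrt_le_sqrt_iff (by positivity)]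
      simp [Real.dist_eq, sq_abs]
    rw [hYeq,
      (show MeasurePreserving (MeasurableEquiv.toLp 2 (Fin m → ℝ)) volume volume from
        (EuclideanSpace.volume_preserving_symm_measurableEquiv_toLp (Fin m)).symm).measure_preimage
        measurableSet_closedBall.nullMeasurableSet,
      Measure.addHaar_closedBall _ _ (by norm_num : (0:ℝ) ≤ 1/8)]
    congr
    simp [finrank_euclideanSpace]
  -- the slab set
  set S : Set (ℝ × (Fin m → ℝ)) :=
    {p | p.2 ∈ Y ∧ γ 0 ≤ p.1 ∧ p ∉ G ∧ (p.1 - a, p.2) ∈ G} with hS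
  have hSmeas : MeasurableSet S := by
    have hSeq : S = (Prod.snd ⁻¹' Y) ∩ (Prod.fst ⁻¹' Set.Ici (γ 0)) ∩ Gᶜ ∩
        ((fun p : ℝ × (Fin m → ℝ) => (p.1 - a, p.2)) ⁻¹' G) := by
      ext p
      simp only [hS, Set.mem_setOf_eq, Set.mem_inter_iff, Set.mem_preimage, Set.mem_Ici,
        Set.mem_compl_iff]
      tauto
    rw [hSeq]
    exact (((measurable_snd hYmeas).inter (measurable_fst measurableSet_Ici)).inter
      hGmeas.compl).inter
      (((measurable_fst.sub measurable_const).prodMk measurable_snd) hGmeas)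
  have hSsub : S ⊆ ((fun p => p + ((a : ℝ), (0 : Fin m → ℝ))) '' G) \ G := by
    rintro ⟨t, y⟩ ⟨hy, hγ0, hnG, hG'⟩
    refine ⟨⟨(t - a, y), hG', ?_⟩, hnG⟩
    refine Prod.ext ?_ ?_
    · show t - a + a = t; ring
    · show y + (0 : Fin m → ℝ) = y; funext j; simp
  -- fiber estimate
  have hfiber : ∀ y ∈ Y, ENNReal.ofReal a ≤ volume ((fun t => (t, y)) ⁻¹' S) := by
    intro y hy
    have hy' : ∑ j, (y j - γ j.succ)^2 ≤ (1/8)^2 := hy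
    set T : Set ℝ := {t | (t, y) ∈ G} with hT
    have hplus : γ 0 + 1/8 ∈ T := by
      apply hmem
      rw [show γ 0 + 1/8 - γ 0 = 1/8 by ring]
      norm_num
      nlinarith
    have hminus : γ 0 - 1/8 ∈ T := by
      apply hmem
      rw [show γ 0 - 1/8 - γ 0 = -(1/8) by ring]
      norm_num
      nlinarith
    have hTclosed : IsClosed T :=
      hGc.isClosed.preimage (Continuous.prodMk continuous_id continuous_const)
    have hTsub : T ⊆ Prod.fst '' G := fun t ht => ⟨(t, y), ht, rfl⟩
    have hTcomp : IsCompact T := (hGc.image continuous_fst).of_isClosed_subset hTclosed hTsub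
    have hTne : T.Nonempty := ⟨γ 0 + 1/8, hplus⟩
    have hbdd : BddAbove T := hTcomp.bddAbove
    have hsup_mem : sSup T ∈ T := hTcomp.sSup_mem hTne
    have hsup_ge : γ 0 + 1/8 ≤ sSup T := le_csSup hbdd hplus
    have hTconv : Convex ℝ T := by
      intro t1 h1 t2 h2 α β hα hβ hαβ
      have h3 := hGconv h1 h2 hα hβ hαβ
      have heq : α • ((t1 : ℝ), y) + β • ((t2 : ℝ), y) = (α • t1 + β • t2, y) := by
        rw [Prod.smul_mk, Prod.smul_mk, Prod.mk_add_mk, ← add_smul, hαβ, one_smul]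
      rw [heq] at h3
      exact h3
    have hIcc : Set.Icc (γ 0 - 1/8) (sSup T) ⊆ T := hTconv.ordConnected.out hminus hsup_mem
    have hsub2 : Set.Ioc (sSup T) (sSup T + a) ⊆ (fun t => (t, y)) ⁻¹' S := by
      rintro t ⟨ht1, ht2⟩
      refine ⟨hy, by linarith, ?_, ?_⟩
      · intro hmemG
        exact absurd (le_csSup hbdd hmemG) (not_le.mpr ht1)
      · apply hIcc
        constructor
        · linarith
        · linarith
    calc ENNReal.ofReal a = volume (Set.Ioc (sSup T) (sSup T + a)) := by
          rw [Real.volume_Ioc]; congr 1; ring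
      _ ≤ _ := measure_mono hsub2
  -- Fubini
  have hSvol : ENNReal.ofReal a * volume Y ≤ volume S := by
    rw [Measure.volume_eq_prod, Measure.prod_apply_symm hSmeas]
    have hind : ENNReal.ofReal a * volume Y
        = ∫⁻ y, Y.indicator (fun _ => ENNReal.ofReal a) y := by
      rw [lintegral_indicator hYmeas, setLIntegral_const, mul_comm]
    rw [hind]
    apply lintegral_mono
    intro y
    by_cases hy : y ∈ Y
    · rw [Set.indicator_of_mem hy]; exact hfiber y hy
    · rw [Set.indicator_of_notMem hy]; exact zero_le
  -- transport back
  have himg : Φ '' (((fun x => x + a • e) '' F) \ F)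
      = ((fun p => p + ((a : ℝ), (0 : Fin m → ℝ))) '' G) \ G := by
    rw [Set.image_diff hΦinj]
    congr 1
    calc Φ '' ((fun x => x + a • e) '' F) = (fun x => Φ (x + a • e)) '' F := by
          rw [Set.image_image]
      _ = (fun x => Φ x + ((a : ℝ), (0 : Fin m → ℝ))) '' F := by
          apply Set.image_congr
          intro x _
          exact hΦtra x
      _ = (fun p => p + ((a : ℝ), (0 : Fin m → ℝ))) '' G := by
          rw [hG, Set.image_image]
  have hRmeas : MeasurableSet
      (((fun p => p + ((a : ℝ), (0 : Fin m → ℝ))) '' G) \ G) :=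
    ((hGc.image (continuous_id.add continuous_const)).isClosed.measurableSet).diff hGmeas
  have hvol_eq : volume (((fun x => x + a • e) '' F) \ F)
      = volume (((fun p => p + ((a : ℝ), (0 : Fin m → ℝ))) '' G) \ G) := by
    have h := hΦmp.measure_preimage (s := Φ '' (((fun x => x + a • e) '' F) \ F))
      (by rw [himg]; exact hRmeas.nullMeasurableSet)
    rw [Set.preimage_image_eq _ hΦinj] at h
    rw [← himg]
    exact h
  calc ENNReal.ofReal (a * (1/8)^m) * volume (Metric.ball (0 : EuclideanSpace ℝ (Fin m)) 1)
      = ENNReal.ofReal a * volume Y := by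
        rw [hYvol, ENNReal.ofReal_mul ha.le, mul_assoc]
    _ ≤ volume S := hSvol
    _ ≤ volume (((fun p => p + ((a : ℝ), (0 : Fin m → ℝ))) '' G) \ G) :=
        measure_mono hSsub
    _ = volume (((fun x => x + a • e) '' F) \ F) := hvol_eq.symm

/-- If `F ⊆ ℝ^d` is compact, convex and contains a ball of radius 1/4,
`e` is a unit vector and `a ∈ (0,2]`, then `|(F + a e) \ F| ≥ 8^{-d} θ_{d-1} a`. -/
theorem translate_diff_volume_lower_bound
    (d : ℕ) (hd : 1 ≤ d) (F : Set (EuclideanSpace ℝ (Fin d)))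
    (hFc : IsCompact F) (hFconv : Convex ℝ F)
    (hFball : ∃ c : EuclideanSpace ℝ (Fin d), Metric.closedBall c (1/4) ⊆ F)
    (e : EuclideanSpace ℝ (Fin d)) (he : ‖e‖ = 1)
    (a : ℝ) (ha : a ∈ Set.Ioc (0:ℝ) 2) :
    ENNReal.ofReal (((8:ℝ)^d)⁻¹ * ubv (d-1) * a)
      ≤ volume (((fun x => x + a • e) '' F) \ F) := by
  obtain ⟨ha0, ha2⟩ := ha
  obtain ⟨m, rfl⟩ : ∃ m, d = m + 1 := ⟨d - 1, (Nat.succ_pred_eq_of_pos hd).symm⟩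
  set a' := min a (1/4) with ha'
  have ha'0 : 0 < a' := lt_min ha0 (by norm_num)
  have ha'4 : a' ≤ 1/4 := min_le_right _ _
  have h1 := aux_small m F hFc hFconv hFball e he ha'0 ha'4
  have h2 := step_mono (m+1) F hFconv e ha'0 (min_le_left _ _)
  refine le_trans ?_ (h1.trans h2)
  have hball : volume (Metric.ball (0 : EuclideanSpace ℝ (Fin m)) 1)
      = ENNReal.ofReal (ubv m) := by
    rw [ubv, ENNReal.ofReal_toReal measure_ball_lt_top.ne]
  rw [hball, ← ENNReal.ofReal_mul (by positivity)]
  apply ENNReal.ofReal_le_ofReal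
  have hubv : 0 ≤ ubv m := ENNReal.toReal_nonneg
  have hm : (m + 1) - 1 = m := by omega
  rw [hm]
  have hdiv : a / 8 ≤ a' := by
    rcases le_total a (1/4) with h | h
    · rw [ha', min_eq_left h]; linarith
    · rw [ha', min_eq_right h]; linarith
  have h8 : ((8:ℝ)^(m+1))⁻¹ = (1/8)^m * (1/8) := by
    rw [pow_succ]
    rw [mul_inv]
    congr 1
    · rw [← inv_pow]; norm_num
    · norm_num
  have key : ((8:ℝ)^(m+1))⁻¹ * a ≤ a' * (1/8)^m := by
    rw [h8]
    calc (1/8:ℝ)^m * (1/8) * a = (1/8)^m * (a/8) := by ring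
      _ ≤ (1/8)^m * a' := by
          apply mul_le_mul_of_nonneg_left hdiv (by positivity)
      _ = a' * (1/8)^m := mul_comm _ _
  calc ((8:ℝ)^(m+1))⁻¹ * ubv m * a = (((8:ℝ)^(m+1))⁻¹ * a) * ubv m := by ring
    _ ≤ (a' * (1/8)^m) * ubv m := mul_le_mul_of_nonneg_right key hubv
    _ = a' * (1/8)^m * ubv m := rfl
end

section
/- Fix $d \geq 2$ and let $h(a) = \theta_{d-1}\int_0^a (1-y^2)^{(d-1)/2}\,dy$ for $a \in [0,1]$. Let $\ell \in \mathbb{Z}_{\geq 0}$, $\alpha_0 > 0$ and $\varepsilon \in (0,1)$. Then as $s \to \infty$, $$\theta_{d-1} \int_0^1 e^{-s h(a)} (\alpha_0 + h(a))^{\ell}\, da = \alpha_0^{\ell} s^{-1} + \ell \alpha_0^{\ell-1} s^{-2} + O(s^{\varepsilon - 3}).$$ -/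
open MeasureTheory Metric Set Real intervalIntegral


/-- The slab-volume function `h(a) = θ_{d-1} ∫_0^a (1-y²)^{(d-1)/2} dy`. -/
noncomputable def hSlab (d : ℕ) (a : ℝ) : ℝ :=
  ubv (d-1) * ∫ y in (0:ℝ)..a, (1 - y^2) ^ (((d:ℝ) - 1)/2)



/-- `(x/n)^n ≤ e^x` for `x ≥ 0`. -/
lemma aux_exp_ge_pow (n : ℕ) {x : ℝ} (hx : 0 ≤ x) : (x / n) ^ n ≤ Real.exp x := by
  rcases Nat.eq_zero_or_pos n with rfl | hn
  · simpa using Real.one_le_exp hx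
  · have hn' : (0:ℝ) < n := by exact_mod_cast hn
    have h1 : x / n ≤ Real.exp (x / n) := le_trans (by linarith) (Real.add_one_le_exp _)
    have h2 : (x / n) ^ n ≤ (Real.exp (x / n)) ^ n :=
      pow_le_pow_left₀ (by positivity) h1 n
    calc (x / n) ^ n ≤ (Real.exp (x / n)) ^ n := h2
      _ = Real.exp ((n : ℝ) * (x / n)) := by rw [← Real.exp_nat_mul]
      _ = Real.exp x := by rw [mul_div_cancel₀ _ (ne_of_gt hn')]

/-- `x^n e^{-x} ≤ n^n` for `x ≥ 0`. -/
lemma aux_pow_mul_exp_neg_le (n : ℕ) {x : ℝ} (hx : 0 ≤ x) :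
    x ^ n * Real.exp (-x) ≤ (n : ℝ) ^ n := by
  rcases Nat.eq_zero_or_pos n with rfl | hn
  · simpa using Real.exp_le_one_iff.mpr (by linarith : -x ≤ 0)
  · have hn' : (0:ℝ) < n := by exact_mod_cast hn
    have h := aux_exp_ge_pow n hx
    rw [div_pow] at h
    have : x ^ n ≤ (n:ℝ)^n * Real.exp x := by
      rw [div_le_iff₀ (by positivity)] at h
      linarith [h]
    calc x ^ n * Real.exp (-x) ≤ ((n:ℝ)^n * Real.exp x) * Real.exp (-x) := by
          exact mul_le_mul_of_nonneg_right this (Real.exp_nonneg _)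
      _ = (n:ℝ)^n := by rw [mul_assoc, ← Real.exp_add]; simp

/-- `a^n e^{-λ a} ≤ n^n / λ^n` for `λ > 0`, `a ≥ 0`. -/
lemma aux_pow_mul_exp_neg_mul_le (n : ℕ) {lam a : ℝ} (hlam : 0 < lam) (ha : 0 ≤ a) :
    a ^ n * Real.exp (-(lam * a)) ≤ (n : ℝ) ^ n / lam ^ n := by
  have h := aux_pow_mul_exp_neg_le n (x := lam * a) (by positivity)
  have hpow : (lam * a) ^ n = lam ^ n * a ^ n := mul_pow _ _ _
  rw [hpow] at h
  rw [le_div_iff₀ (by positivity)]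
  calc a ^ n * Real.exp (-(lam * a)) * lam ^ n
      = lam ^ n * a ^ n * Real.exp (-(lam * a)) := by ring
    _ ≤ (n:ℝ)^n := h

/-- `e^{-x} ≤ n^n / x^n` for `x > 0`. -/
lemma aux_exp_neg_le (n : ℕ) {x : ℝ} (hx : 0 < x) : Real.exp (-x) ≤ (n : ℝ) ^ n / x ^ n := by
  have h := aux_pow_mul_exp_neg_le n hx.le
  rw [le_div_iff₀ (by positivity)]
  nlinarith



lemma aux_integral_exp_neg (mu b : ℝ) (hmu : mu ≠ 0) :
    ∫ a in (0:ℝ)..b, Real.exp (-(mu * a)) = (1 - Real.exp (-(mu * b))) / mu := by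
  have hderiv : ∀ a ∈ Set.uIcc (0:ℝ) b,
      HasDerivAt (fun a => -(Real.exp (-(mu * a)) / mu)) (Real.exp (-(mu * a))) a := by
    intro a _
    have h1 : HasDerivAt (fun a : ℝ => -(mu * a)) (-mu) a := by
      simpa using ((hasDerivAt_id a).const_mul mu).fun_neg
    have h2 : HasDerivAt (fun a : ℝ => Real.exp (-(mu * a)))
        (Real.exp (-(mu * a)) * -mu) a := (Real.hasDerivAt_exp _).comp a h1
    have h3 := (h2.div_const mu).fun_neg
    exact h3.congr_deriv (by field_simp)
  have hcont : IntervalIntegrable (fun a => Real.exp (-(mu * a))) volume 0 b :=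
    (Real.continuous_exp.comp (by continuity)).intervalIntegrable _ _
  rw [integral_eq_sub_of_hasDerivAt hderiv hcont]
  field_simp
  simp only [mul_zero, neg_zero, Real.exp_zero]
  ring

lemma aux_integral_exp_neg_le (mu b : ℝ) (hmu : 0 < mu) (hb : 0 ≤ b) :
    ∫ a in (0:ℝ)..b, Real.exp (-(mu * a)) ≤ 1 / mu := by
  rw [aux_integral_exp_neg mu b hmu.ne']
  have h := Real.exp_nonneg (-(mu * b))
  rw [div_le_div_iff₀ hmu hmu]
  nlinarith

lemma aux_integral_mul_exp_neg (mu : ℝ) (hmu : mu ≠ 0) :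
    ∫ a in (0:ℝ)..1, a * Real.exp (-(mu * a)) = (1 - (1 + mu) * Real.exp (-mu)) / mu ^ 2 := by
  have hderiv : ∀ a ∈ Set.uIcc (0:ℝ) 1,
      HasDerivAt (fun a => -((a / mu + 1 / mu ^ 2) * Real.exp (-(mu * a))))
        (a * Real.exp (-(mu * a))) a := by
    intro a _
    have h1 : HasDerivAt (fun a : ℝ => -(mu * a)) (-mu) a := by
      simpa using ((hasDerivAt_id a).const_mul mu).fun_neg
    have h2 : HasDerivAt (fun a : ℝ => Real.exp (-(mu * a)))
        (Real.exp (-(mu * a)) * -mu) a := (Real.hasDerivAt_exp _).comp a h1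
    have h4 : HasDerivAt (fun a : ℝ => a / mu + 1 / mu ^ 2) (1 / mu) a := by
      have := ((hasDerivAt_id a).div_const mu).add_const (1 / mu ^ 2)
      simpa [one_div] using this
    have h5 := (h4.fun_mul h2).fun_neg
    exact h5.congr_deriv (by field_simp; ring)
  have hcont : IntervalIntegrable (fun a => a * Real.exp (-(mu * a))) volume 0 1 :=
    (continuous_id.mul (Real.continuous_exp.comp (by continuity))).intervalIntegrable _ _
  rw [integral_eq_sub_of_hasDerivAt hderiv hcont]
  field_simp
  simp only [mul_zero, neg_zero, Real.exp_zero]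
  ring



/-- Second-order Taylor bound for `(A+t)^ℓ` on `[0, b]`. -/
lemma aux_pow_taylor (A b : ℝ) (hA : 0 < A) (hb : 0 ≤ b) (ℓ : ℕ) :
    ∃ M : ℝ, 0 ≤ M ∧ ∀ t ∈ Icc (0:ℝ) b,
      |(A + t) ^ ℓ - A ^ ℓ - (ℓ : ℝ) * A ^ (ℓ - 1) * t| ≤ M * t ^ 2 := by
  induction ℓ with
  | zero => exact ⟨0, le_refl 0, fun t _ => by simp⟩
  | succ n ih =>
    obtain ⟨M, hM, hMt⟩ := ih
    refine ⟨(A + b) * M + n * A ^ (n - 1), by positivity, fun t ht => ?_⟩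
    obtain ⟨ht0, htb⟩ := ht
    have hAA : (n : ℝ) * A ^ (n - 1) * A = (n : ℝ) * A ^ n := by
      rcases Nat.eq_zero_or_pos n with rfl | hn
      · simp
      · rw [mul_assoc, ← pow_succ, Nat.sub_add_cancel hn]
    have key : (A + t) ^ (n + 1) - A ^ (n + 1) - ((n:ℝ) + 1) * A ^ n * t
        = (A + t) * ((A + t) ^ n - A ^ n - (n:ℝ) * A ^ (n - 1) * t)
          + (n:ℝ) * A ^ (n - 1) * t ^ 2 := by
      linear_combination t * hAA
    have hE := hMt t ⟨ht0, htb⟩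
    have h1 : |(A + t) ^ (n + 1) - A ^ (n + 1) - ((n:ℝ) + 1) * A ^ n * t|
        ≤ (A + t) * (M * t ^ 2) + (n:ℝ) * A ^ (n - 1) * t ^ 2 := by
      rw [key]
      calc |(A + t) * ((A + t) ^ n - A ^ n - (n:ℝ) * A ^ (n - 1) * t)
            + (n:ℝ) * A ^ (n - 1) * t ^ 2|
          ≤ |(A + t) * ((A + t) ^ n - A ^ n - (n:ℝ) * A ^ (n - 1) * t)|
            + |(n:ℝ) * A ^ (n - 1) * t ^ 2| := abs_add_le _ _
        _ ≤ (A + t) * (M * t ^ 2) + (n:ℝ) * A ^ (n - 1) * t ^ 2 := by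
            gcongr
            · rw [abs_mul, abs_of_nonneg (by positivity : (0:ℝ) ≤ A + t)]
              exact mul_le_mul_of_nonneg_left hE (by positivity)
            · rw [abs_of_nonneg (by positivity)]
    have hcast : ((n + 1 : ℕ) : ℝ) = (n : ℝ) + 1 := by push_cast; ring
    have hsub : (n + 1) - 1 = n := rfl
    rw [hsub, hcast]
    calc |(A + t) ^ (n + 1) - A ^ (n + 1) - ((n:ℝ) + 1) * A ^ n * t|
        ≤ (A + t) * (M * t ^ 2) + (n:ℝ) * A ^ (n - 1) * t ^ 2 := h1
      _ ≤ ((A + b) * M + n * A ^ (n - 1)) * t ^ 2 := by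
          have h2 : (A + t) * (M * t ^ 2) ≤ (A + b) * (M * t ^ 2) := by
            apply mul_le_mul_of_nonneg_right (by linarith) (by positivity)
          nlinarith


lemma aux_pointwise (ℓ : ℕ) (α₀ θ L M K h s a : ℝ)
    (hα₀ : 0 < α₀) (hθ : 0 < θ) (hs : 0 ≤ s) (ha0 : 0 ≤ a) (ha1 : a ≤ 1)
    (hh0 : 0 ≤ h) (hhle : h ≤ θ * a)
    (hL : 0 ≤ L)
    (htaylor : |(α₀ + h) ^ ℓ - α₀ ^ ℓ - L * h| ≤ M * h ^ 2) (hM : 0 ≤ M)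
    (hKh : θ * a - K * a ^ 3 ≤ h) (hK : 0 ≤ K) :
    |Real.exp (-(s * h)) * (α₀ + h) ^ ℓ - Real.exp (-(s*θ*a)) * (α₀ ^ ℓ + L * (θ * a))|
      ≤ (α₀ + θ) ^ ℓ * (Real.exp (-(s * h)) - Real.exp (-(s*θ*a)))
        + (M * θ ^ 2 + L * K) * (a ^ 2 * Real.exp (-(s*θ*a))) := by
  set e1 := Real.exp (-(s * h)) with he1
  set e2 := Real.exp (-(s*θ*a)) with he2
  have he12 : e2 ≤ e1 := by
    apply Real.exp_le_exp.mpr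
    have : s * h ≤ s * θ * a := by nlinarith
    linarith
  have he2pos : 0 < e2 := Real.exp_pos _
  have he2le1 : e2 ≤ 1 := Real.exp_le_one_iff.mpr (by nlinarith)
  have hhθ : h ≤ θ := by nlinarith
  have hpowle : (α₀ + h) ^ ℓ ≤ (α₀ + θ) ^ ℓ := pow_le_pow_left₀ (by positivity) (by linarith) ℓ
  have hpow0 : 0 ≤ (α₀ + h) ^ ℓ := by positivity
  have hdecomp : e1 * (α₀ + h) ^ ℓ - e2 * (α₀ ^ ℓ + L * (θ * a))
      = (e1 - e2) * (α₀ + h) ^ ℓ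
        + e2 * (((α₀ + h) ^ ℓ - α₀ ^ ℓ - L * h) - L * (θ * a - h)) := by ring
  have hbr : |((α₀ + h) ^ ℓ - α₀ ^ ℓ - L * h) - L * (θ * a - h)|
      ≤ (M * θ ^ 2 + L * K) * a ^ 2 := by
    have h1 : |((α₀ + h) ^ ℓ - α₀ ^ ℓ - L * h) - L * (θ * a - h)|
        ≤ |(α₀ + h) ^ ℓ - α₀ ^ ℓ - L * h| + |L * (θ * a - h)| := abs_sub _ _
    have h2 : |L * (θ * a - h)| = L * (θ * a - h) := abs_of_nonneg (by nlinarith)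
    have hsq : h ^ 2 ≤ (θ * a) ^ 2 := by nlinarith [mul_le_mul hhle hhle hh0 (le_trans hh0 hhle)]
    have h3 : M * h ^ 2 ≤ M * θ ^ 2 * a ^ 2 := by nlinarith
    have h4 : L * (θ * a - h) ≤ L * (K * a ^ 3) := mul_le_mul_of_nonneg_left (by linarith) hL
    have ha32 : a ^ 3 ≤ a ^ 2 := by nlinarith [sq_nonneg a]
    have h5 : L * (K * a ^ 3) ≤ L * K * a ^ 2 := by
      have := mul_le_mul_of_nonneg_left ha32 (mul_nonneg hL hK)
      calc L * (K * a ^ 3) = L * K * a ^ 3 := by ring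
        _ ≤ L * K * a ^ 2 := this
    calc |((α₀ + h) ^ ℓ - α₀ ^ ℓ - L * h) - L * (θ * a - h)|
        ≤ |(α₀ + h) ^ ℓ - α₀ ^ ℓ - L * h| + |L * (θ * a - h)| := h1
      _ ≤ M * h ^ 2 + L * (θ * a - h) := by rw [h2] at *; linarith [htaylor]
      _ ≤ (M * θ ^ 2 + L * K) * a ^ 2 := by linarith
  rw [hdecomp]
  calc |(e1 - e2) * (α₀ + h) ^ ℓ + e2 * (((α₀ + h) ^ ℓ - α₀ ^ ℓ - L * h) - L * (θ * a - h))|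
      ≤ |(e1 - e2) * (α₀ + h) ^ ℓ| + |e2 * (((α₀ + h) ^ ℓ - α₀ ^ ℓ - L * h) - L * (θ * a - h))| :=
        abs_add_le _ _
    _ ≤ (e1 - e2) * (α₀ + θ) ^ ℓ + e2 * ((M * θ ^ 2 + L * K) * a ^ 2) := by
        gcongr ?_ + ?_
        · rw [abs_mul, abs_of_nonneg (by linarith : (0:ℝ) ≤ e1 - e2),
            abs_of_nonneg hpow0]
          exact mul_le_mul_of_nonneg_left hpowle (by linarith)
        · rw [abs_mul, abs_of_nonneg he2pos.le]
          exact mul_le_mul_of_nonneg_left hbr he2pos.le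
    _ = (α₀ + θ) ^ ℓ * (e1 - e2) + (M * θ ^ 2 + L * K) * (a ^ 2 * e2) := by ring



lemma aux_exp_one_sub (x : ℝ) : Real.exp x - 1 ≤ x * Real.exp x := by
  have h1 := Real.add_one_le_exp (-x)
  have h2 : Real.exp (-x) * Real.exp x = 1 := by rw [← Real.exp_add]; simp
  nlinarith [Real.exp_pos x]

lemma aux_exp_diff (θ K s h a : ℝ) (hθ : 0 < θ) (hs : 0 < s) (ha0 : 0 ≤ a)
    (hhle : h ≤ θ * a) (hKh : θ * a - K * a ^ 3 ≤ h) (hK : 0 ≤ K)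
    (hhalf : K * a ^ 3 ≤ θ * a / 2) :
    Real.exp (-(s * h)) - Real.exp (-(s * θ * a))
      ≤ (1728 * K / (θ ^ 3 * s ^ 2)) * Real.exp (-(s * θ / 4 * a)) := by
  set x := s * (θ * a - h) with hxdef
  have hx0 : 0 ≤ x := by nlinarith
  have hx1 : x ≤ s * K * a ^ 3 := by nlinarith
  have hx2 : x ≤ s * θ * a / 2 := by nlinarith
  have hid : Real.exp (-(s * h)) = Real.exp (-(s * θ * a)) * Real.exp x := by
    rw [← Real.exp_add]; congr 1; ring
  have hstep1 : Real.exp (-(s * h)) - Real.exp (-(s * θ * a))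
      = Real.exp (-(s * θ * a)) * (Real.exp x - 1) := by rw [hid]; ring
  have hstep2 : Real.exp x - 1 ≤ (s * K * a ^ 3) * Real.exp (s * θ * a / 2) := by
    have h1 := aux_exp_one_sub x
    have h2 : Real.exp x ≤ Real.exp (s * θ * a / 2) := Real.exp_le_exp.mpr hx2
    have h3 : x * Real.exp x ≤ (s * K * a ^ 3) * Real.exp (s * θ * a / 2) := by
      apply mul_le_mul hx1 h2 (Real.exp_pos x).le (by nlinarith)
    linarith
  have hcomb : Real.exp (-(s * θ * a)) * Real.exp (s * θ * a / 2)
      = Real.exp (-(s * θ / 2 * a)) := by rw [← Real.exp_add]; congr 1; ring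
  have hstep3 : Real.exp (-(s * h)) - Real.exp (-(s * θ * a))
      ≤ (s * K * a ^ 3) * Real.exp (-(s * θ / 2 * a)) := by
    rw [hstep1, ← hcomb]
    calc Real.exp (-(s * θ * a)) * (Real.exp x - 1)
        ≤ Real.exp (-(s * θ * a)) * ((s * K * a ^ 3) * Real.exp (s * θ * a / 2)) :=
          mul_le_mul_of_nonneg_left hstep2 (Real.exp_pos _).le
      _ = (s * K * a ^ 3) * (Real.exp (-(s * θ * a)) * Real.exp (s * θ * a / 2)) := by ring
  have hsplit : Real.exp (-(s * θ / 2 * a)) =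
      Real.exp (-(s * θ / 4 * a)) * Real.exp (-(s * θ / 4 * a)) := by
    rw [← Real.exp_add]; congr 1; ring
  have hlam : (0:ℝ) < s * θ / 4 := by positivity
  have hbd := aux_pow_mul_exp_neg_mul_le 3 hlam ha0
  have h27 : ((3:ℕ):ℝ) ^ 3 / (s * θ / 4) ^ 3 = 1728 / (s ^ 3 * θ ^ 3) := by
    push_cast; field_simp; ring
  rw [h27] at hbd
  calc Real.exp (-(s * h)) - Real.exp (-(s * θ * a))
      ≤ (s * K * a ^ 3) * Real.exp (-(s * θ / 2 * a)) := hstep3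
    _ = (s * K) * (a ^ 3 * Real.exp (-(s * θ / 4 * a))) * Real.exp (-(s * θ / 4 * a)) := by
        rw [hsplit]; ring
    _ ≤ (s * K) * (1728 / (s ^ 3 * θ ^ 3)) * Real.exp (-(s * θ / 4 * a)) := by
        apply mul_le_mul_of_nonneg_right _ (Real.exp_pos _).le
        exact mul_le_mul_of_nonneg_left hbd (by positivity)
    _ = (1728 * K / (θ ^ 3 * s ^ 2)) * Real.exp (-(s * θ / 4 * a)) := by
        field_simp





lemma aux_ubv_pos (n : ℕ) : 0 < ubv n := by
  unfold ubv
  rw [ENNReal.toReal_pos_iff]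
  exact ⟨measure_ball_pos volume 0 one_pos, measure_ball_lt_top⟩

lemma aux_f_cont (p : ℝ) (hp : 0 ≤ p) : Continuous fun y : ℝ => (1 - y^2) ^ p := by
  apply Continuous.rpow_const (by continuity)
  intro y
  exact Or.inr hp

lemma aux_f_le_one (p : ℝ) (hp : 0 ≤ p) {y : ℝ} (hy : y ∈ Icc (0:ℝ) 1) :
    (1 - y^2) ^ p ≤ 1 := by
  apply Real.rpow_le_one (by nlinarith [hy.1, hy.2]) (by nlinarith [hy.1, hy.2]) hp

lemma aux_f_nonneg (p : ℝ) {y : ℝ} (hy : y ∈ Icc (0:ℝ) 1) :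
    0 ≤ (1 - y^2) ^ p :=
  Real.rpow_nonneg (by nlinarith [hy.1, hy.2]) p

lemma aux_f_ge (p : ℝ) (hp : (1:ℝ)/2 ≤ p) {y : ℝ} (hy : y ∈ Icc (0:ℝ) 1) :
    1 - (max p 1) * y ^ 2 ≤ (1 - y^2) ^ p := by
  set c := max p 1 with hc
  rcases le_or_gt (1 - c * y ^ 2) 0 with h0 | h0
  · exact h0.trans (aux_f_nonneg p hy)
  · have hy2 : y ^ 2 < 1 / c := by
      have hc1 : (1:ℝ) ≤ c := le_max_right _ _
      rw [lt_div_iff₀ (by linarith)]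
      nlinarith
    have hb : 0 < 1 - y ^ 2 := by
      have hc1 : (1:ℝ) ≤ c := le_max_right _ _
      have : y ^ 2 < 1 := lt_of_lt_of_le hy2 (by rw [div_le_one (by linarith)]; exact hc1)
      linarith
    rcases le_or_gt 1 p with hp1 | hp1
    · have := one_add_mul_self_le_rpow_one_add (s := -y^2) (by nlinarith [hy.1, hy.2]) hp1
      have hpc : p ≤ c := le_max_left _ _
      calc 1 - c * y ^ 2 ≤ 1 + p * (-y^2) := by nlinarith [sq_nonneg y]
        _ ≤ (1 + -y^2) ^ p := this
        _ = (1 - y^2) ^ p := by ring_nf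
    · have hc1 : c = 1 := max_eq_right hp1.le
      have : (1 - y^2) ^ (1:ℝ) ≤ (1 - y^2) ^ p :=
        Real.rpow_le_rpow_of_exponent_ge hb (by nlinarith [hy.1]) hp1.le
      rw [Real.rpow_one] at this
      calc 1 - c * y ^ 2 = 1 - y ^ 2 := by rw [hc1]; ring
        _ ≤ (1 - y^2) ^ p := this






lemma aux_p_half (d : ℕ) (hd : 2 ≤ d) : (1:ℝ)/2 ≤ ((d:ℝ) - 1)/2 := by
  have : (2:ℝ) ≤ (d:ℝ) := by exact_mod_cast hd
  linarith

lemma aux_p_nonneg (d : ℕ) (hd : 2 ≤ d) : (0:ℝ) ≤ ((d:ℝ) - 1)/2 := by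
  linarith [aux_p_half d hd]

lemma aux_hSlab_cont (d : ℕ) (hd : 2 ≤ d) : Continuous (hSlab d) := by
  unfold hSlab
  exact continuous_const.mul (intervalIntegral.continuous_primitive
    (fun a b => ((aux_f_cont (((d:ℝ) - 1)/2) (aux_p_nonneg d hd)).intervalIntegrable a b)) 0)

lemma aux_hSlab_le (d : ℕ) (hd : 2 ≤ d) {a : ℝ} (ha : a ∈ Icc (0:ℝ) 1) :
    hSlab d a ≤ ubv (d-1) * a := by
  unfold hSlab
  have h1 : (∫ y in (0:ℝ)..a, (1 - y^2) ^ (((d:ℝ) - 1)/2)) ≤ ∫ y in (0:ℝ)..a, (1:ℝ) := by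
    apply intervalIntegral.integral_mono_on ha.1
      ((aux_f_cont (((d:ℝ) - 1)/2) (aux_p_nonneg d hd)).intervalIntegrable _ _)
      (intervalIntegrable_const)
    intro y hy
    exact aux_f_le_one _ (aux_p_nonneg d hd) ⟨hy.1, hy.2.trans ha.2⟩
  simp only [integral_one] at h1
  have := (aux_ubv_pos (d-1)).le
  calc ubv (d-1) * ∫ y in (0:ℝ)..a, (1 - y^2) ^ (((d:ℝ) - 1)/2)
      ≤ ubv (d-1) * (a - 0) := by
        apply mul_le_mul_of_nonneg_left (by simpa using h1) this
    _ = ubv (d-1) * a := by ring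

lemma aux_hSlab_ge (d : ℕ) (hd : 2 ≤ d) {a : ℝ} (ha : a ∈ Icc (0:ℝ) 1) :
    ubv (d-1) * a - (ubv (d-1) * (max (((d:ℝ) - 1)/2) 1) / 3) * a ^ 3 ≤ hSlab d a := by
  set p := ((d:ℝ) - 1)/2
  set c := max p 1 with hc
  have hc1 : (1:ℝ) ≤ c := le_max_right _ _
  have h1 : (∫ y in (0:ℝ)..a, (1 - c * y ^ 2)) ≤ ∫ y in (0:ℝ)..a, (1 - y^2) ^ p := by
    apply intervalIntegral.integral_mono_on ha.1
      ((by continuity : Continuous fun y : ℝ => 1 - c * y ^ 2).intervalIntegrable _ _)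
      ((aux_f_cont (((d:ℝ) - 1)/2) (aux_p_nonneg d hd)).intervalIntegrable _ _)
    intro y hy
    exact aux_f_ge p (aux_p_half d hd) ⟨hy.1, hy.2.trans ha.2⟩
  have h2 : (∫ y in (0:ℝ)..a, (1 - c * y ^ 2)) = a - c * a ^ 3 / 3 := by
    rw [intervalIntegral.integral_sub (g := fun y => c * y ^ 2) intervalIntegrable_const
      (((continuous_const.mul (continuous_pow 2)) : Continuous fun y:ℝ => c * y ^ 2).intervalIntegrable _ _),
      intervalIntegral.integral_const_mul, integral_pow]
    simp
    ring
  rw [h2] at h1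
  have hθ := (aux_ubv_pos (d-1)).le
  unfold hSlab
  calc ubv (d-1) * a - (ubv (d-1) * c / 3) * a ^ 3
      = ubv (d-1) * (a - c * a ^ 3 / 3) := by ring
    _ ≤ ubv (d-1) * ∫ y in (0:ℝ)..a, (1 - y^2) ^ p := mul_le_mul_of_nonneg_left h1 hθ

lemma aux_hSlab_nonneg (d : ℕ) (hd : 2 ≤ d) {a : ℝ} (ha : a ∈ Icc (0:ℝ) 1) : 0 ≤ hSlab d a := by
  unfold hSlab
  apply mul_nonneg (aux_ubv_pos (d-1)).le
  apply intervalIntegral.integral_nonneg ha.1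
  intro y hy
  exact aux_f_nonneg _ ⟨hy.1, hy.2.trans ha.2⟩

lemma aux_hSlab_mono (d : ℕ) (hd : 2 ≤ d) {a a' : ℝ} (ha : 0 ≤ a) (haa : a ≤ a') (ha' : a' ≤ 1) :
    hSlab d a ≤ hSlab d a' := by
  unfold hSlab
  apply mul_le_mul_of_nonneg_left _ (aux_ubv_pos (d-1)).le
  have hint : ∀ u v : ℝ, IntervalIntegrable (fun y : ℝ => (1 - y^2) ^ (((d:ℝ) - 1)/2)) volume u v :=
    fun u v => (aux_f_cont (((d:ℝ) - 1)/2) (aux_p_nonneg d hd)).intervalIntegrable u v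
  have := intervalIntegral.integral_add_adjacent_intervals (hint 0 a) (hint a a')
  rw [← this]
  have hpos : 0 ≤ ∫ y in a..a', (1 - y^2) ^ (((d:ℝ) - 1)/2) := by
    apply intervalIntegral.integral_nonneg haa
    intro y hy
    exact aux_f_nonneg _ ⟨ha.trans hy.1, hy.2.trans ha'⟩
  linarith

set_option maxHeartbeats 1000000 in
/-- as `s → ∞`,
`θ_{d-1} ∫_0^1 e^{-s h(a)} (α₀ + h(a))^ℓ da = α₀^ℓ s⁻¹ + ℓ α₀^{ℓ-1} s⁻² + O(s^{ε-3})`. -/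
theorem integral_exp_slab_asymptotics (d : ℕ) (hd : 2 ≤ d) (ℓ : ℕ)
    (α₀ : ℝ) (hα₀ : 0 < α₀) (ε : ℝ) (hε : ε ∈ Set.Ioo (0:ℝ) 1) :
    ∃ C s₀ : ℝ, ∀ s ≥ s₀,
      |ubv (d-1) * (∫ a in (0:ℝ)..1, Real.exp (-(s * hSlab d a)) * (α₀ + hSlab d a)^ℓ)
        - (α₀^ℓ / s + (ℓ:ℝ) * α₀^(ℓ-1) / s^2)| ≤ C * s ^ (ε - 3) := by
  set θ := ubv (d-1) with hθdef
  have hθ : 0 < θ := aux_ubv_pos _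
  set p := ((d:ℝ) - 1)/2 with hpdef
  set c := max p 1 with hcdef
  have hc1 : (1:ℝ) ≤ c := le_max_right _ _
  have hc0 : (0:ℝ) < c := lt_of_lt_of_le one_pos hc1
  set K := θ * c / 3 with hKdef
  have hK : 0 < K := by rw [hKdef]; positivity
  set L := (ℓ:ℝ) * α₀ ^ (ℓ - 1) with hLdef
  have hL : 0 ≤ L := by rw [hLdef]; positivity
  obtain ⟨M, hM0, hMt⟩ := aux_pow_taylor α₀ θ hα₀ hθ.le ℓ
  set B := (α₀ + θ) ^ ℓ with hBdef
  have hB : 0 < B := by rw [hBdef]; positivity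
  set a₁ := min (Real.sqrt (3/(2*c))) 1 with ha₁def
  have ha₁0 : 0 < a₁ := lt_min (Real.sqrt_pos.mpr (by positivity)) one_pos
  have ha₁1 : a₁ ≤ 1 := min_le_right _ _
  have hhalf : ∀ a : ℝ, 0 ≤ a → a ≤ a₁ → K * a ^ 3 ≤ θ * a / 2 := by
    intro a ha0 haa₁
    have h1 : a ≤ Real.sqrt (3/(2*c)) := haa₁.trans (min_le_left _ _)
    have h2 : a ^ 2 ≤ 3/(2*c) := by
      have hs := Real.sq_sqrt (by positivity : (0:ℝ) ≤ 3/(2*c))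
      nlinarith [Real.sqrt_nonneg (3/(2*c))]
    have h3 : θ * c / 3 * a ^ 2 ≤ θ * c / 3 * (3/(2*c)) :=
      mul_le_mul_of_nonneg_left h2 (by positivity)
    rw [hKdef]
    calc θ * c / 3 * a ^ 3 = (θ * c / 3 * a ^ 2) * a := by ring
      _ ≤ (θ * c / 3 * (3/(2*c))) * a := mul_le_mul_of_nonneg_right h3 ha0
      _ = θ * a / 2 := by field_simp
  set m := θ * a₁ / 2 with hmdef
  have hm : 0 < m := by rw [hmdef]; positivity
  have hle : ∀ a ∈ Set.Icc (0:ℝ) 1, hSlab d a ≤ θ * a := fun a ha => aux_hSlab_le d hd ha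
  have hge : ∀ a ∈ Set.Icc (0:ℝ) 1, θ * a - K * a ^ 3 ≤ hSlab d a := by
    intro a ha
    have h := aux_hSlab_ge d hd ha
    rw [← hθdef, ← hpdef, ← hcdef, ← hKdef] at h
    exact h
  have hpos : ∀ a ∈ Set.Icc (0:ℝ) 1, 0 ≤ hSlab d a := fun a ha => aux_hSlab_nonneg d hd ha
  have hm_le : ∀ a ∈ Set.Icc a₁ 1, m ≤ hSlab d a := by
    rintro a ⟨h1, h2⟩
    have ha₁Icc : a₁ ∈ Set.Icc (0:ℝ) 1 := ⟨ha₁0.le, ha₁1⟩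
    have hga := hge a₁ ha₁Icc
    have h3 := hhalf a₁ ha₁0.le le_rfl
    have h4 : m ≤ hSlab d a₁ := by rw [hmdef]; linarith
    exact h4.trans (aux_hSlab_mono d hd ha₁0.le h1 h2)
  have hcontH : Continuous (hSlab d) := aux_hSlab_cont d hd
  -- Taylor with L
  have hMt' : ∀ a ∈ Set.Icc (0:ℝ) 1,
      |(α₀ + hSlab d a) ^ ℓ - α₀ ^ ℓ - L * hSlab d a| ≤ M * (hSlab d a) ^ 2 := by
    intro a ha
    have h1 : hSlab d a ∈ Set.Icc (0:ℝ) θ := by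
      refine ⟨hpos a ha, (hle a ha).trans ?_⟩
      nlinarith [ha.1, ha.2]
    have := hMt _ h1
    rw [hLdef]
    convert this using 3
  -- final constant
  set D₁ : ℝ := 6912 * K / θ ^ 4 + 216 / (θ ^ 3 * a₁ ^ 3) with hD₁def
  have hD₁0 : 0 ≤ D₁ := by rw [hD₁def]; positivity
  set C₅ : ℝ := M * θ ^ 2 + L * K with hC₅def
  have hC₅0 : 0 ≤ C₅ := by rw [hC₅def]; positivity
  set DE : ℝ := (27 * α₀ ^ ℓ + 283 * L) / θ ^ 3 with hDEdef
  have hDE0 : 0 ≤ DE := by rw [hDEdef]; positivity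
  refine ⟨θ * (B * D₁ + C₅ * (32 / θ ^ 3)) + DE, 1, fun s hs => ?_⟩
  have hs0 : (0:ℝ) < s := lt_of_lt_of_le one_pos hs
  -- continuity of integrands
  have conte1 : Continuous fun a => Real.exp (-(s * hSlab d a)) :=
    Real.continuous_exp.comp (continuous_const.mul hcontH).neg
  have conte2 : Continuous fun a : ℝ => Real.exp (-(s * θ * a)) :=
    Real.continuous_exp.comp (continuous_const.mul continuous_id).neg
  have conte2' : Continuous fun a : ℝ => Real.exp (-(s * θ / 2 * a)) :=
    Real.continuous_exp.comp (continuous_const.mul continuous_id).neg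
  have conte2'' : Continuous fun a : ℝ => Real.exp (-(s * θ / 4 * a)) :=
    Real.continuous_exp.comp (continuous_const.mul continuous_id).neg
  have contG : Continuous fun a => Real.exp (-(s * hSlab d a)) * (α₀ + hSlab d a) ^ ℓ :=
    conte1.mul ((continuous_const.add hcontH).pow ℓ)
  have contG₃ : Continuous fun a : ℝ => Real.exp (-(s * θ * a)) * (α₀ ^ ℓ + L * (θ * a)) :=
    conte2.mul (continuous_const.add (continuous_const.mul (continuous_const.mul continuous_id)))
  -- J₂ bound
  have hJ₂ : (∫ a in (0:ℝ)..1, a ^ 2 * Real.exp (-(s * θ * a))) ≤ 32 / (θ ^ 3 * s ^ 3) := by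
    have hpt : ∀ a ∈ Set.Icc (0:ℝ) 1,
        a ^ 2 * Real.exp (-(s * θ * a)) ≤ 16 / (s * θ) ^ 2 * Real.exp (-(s * θ / 2 * a)) := by
      intro a ha
      have hsplit : Real.exp (-(s * θ * a))
          = Real.exp (-(s * θ / 2 * a)) * Real.exp (-(s * θ / 2 * a)) := by
        rw [← Real.exp_add]; congr 1; ring
      have hbd := aux_pow_mul_exp_neg_mul_le 2 (by positivity : (0:ℝ) < s * θ / 2) ha.1
      have h4 : ((2:ℕ):ℝ) ^ 2 / (s * θ / 2) ^ 2 = 16 / (s * θ) ^ 2 := by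
        push_cast; field_simp; ring
      rw [h4] at hbd
      calc a ^ 2 * Real.exp (-(s * θ * a))
          = (a ^ 2 * Real.exp (-(s * θ / 2 * a))) * Real.exp (-(s * θ / 2 * a)) := by
            rw [hsplit]; ring
        _ ≤ 16 / (s * θ) ^ 2 * Real.exp (-(s * θ / 2 * a)) :=
            mul_le_mul_of_nonneg_right hbd (Real.exp_pos _).le
    have hmono := intervalIntegral.integral_mono_on (μ := volume) zero_le_one
      (((continuous_pow 2).mul conte2).intervalIntegrable 0 1)
      ((continuous_const.mul conte2').intervalIntegrable 0 1) hpt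
    have hval : (∫ a in (0:ℝ)..1, 16 / (s * θ) ^ 2 * Real.exp (-(s * θ / 2 * a)))
        ≤ 16 / (s * θ) ^ 2 * (1 / (s * θ / 2)) := by
      rw [intervalIntegral.integral_const_mul]
      exact mul_le_mul_of_nonneg_left
        (aux_integral_exp_neg_le (s * θ / 2) 1 (by positivity) zero_le_one) (by positivity)
    have heq : 16 / (s * θ) ^ 2 * (1 / (s * θ / 2)) = 32 / (θ ^ 3 * s ^ 3) := by
      field_simp; ring
    simp only [Pi.mul_apply] at hmono
    linarith
  -- J₁ bound
  have hJ₁ : (∫ a in (0:ℝ)..1, (Real.exp (-(s * hSlab d a)) - Real.exp (-(s * θ * a))))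
      ≤ D₁ / s ^ 3 := by
    have hint1 : IntervalIntegrable
        (fun a => Real.exp (-(s * hSlab d a)) - Real.exp (-(s * θ * a))) volume 0 a₁ :=
      (conte1.sub conte2).intervalIntegrable 0 a₁
    have hint2 : IntervalIntegrable
        (fun a => Real.exp (-(s * hSlab d a)) - Real.exp (-(s * θ * a))) volume a₁ 1 :=
      (conte1.sub conte2).intervalIntegrable a₁ 1
    rw [← intervalIntegral.integral_add_adjacent_intervals hint1 hint2]
    have hP1 : (∫ a in (0:ℝ)..a₁, (Real.exp (-(s * hSlab d a)) - Real.exp (-(s * θ * a))))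
        ≤ 6912 * K / (θ ^ 4 * s ^ 3) := by
      have hpt : ∀ a ∈ Set.Icc (0:ℝ) a₁,
          Real.exp (-(s * hSlab d a)) - Real.exp (-(s * θ * a))
            ≤ (1728 * K / (θ ^ 3 * s ^ 2)) * Real.exp (-(s * θ / 4 * a)) := by
        intro a ha
        have haIcc : a ∈ Set.Icc (0:ℝ) 1 := ⟨ha.1, ha.2.trans ha₁1⟩
        exact aux_exp_diff θ K s (hSlab d a) a hθ hs0 ha.1 (hle a haIcc) (hge a haIcc)
          hK.le (hhalf a ha.1 ha.2)
      have hmono := intervalIntegral.integral_mono_on (μ := volume) ha₁0.le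
        ((conte1.sub conte2).intervalIntegrable 0 a₁)
        ((continuous_const.mul conte2'').intervalIntegrable 0 a₁) hpt
      have hval : (∫ a in (0:ℝ)..a₁, (1728 * K / (θ ^ 3 * s ^ 2)) * Real.exp (-(s * θ / 4 * a)))
          ≤ (1728 * K / (θ ^ 3 * s ^ 2)) * (1 / (s * θ / 4)) := by
        rw [intervalIntegral.integral_const_mul]
        exact mul_le_mul_of_nonneg_left
          (aux_integral_exp_neg_le (s * θ / 4) a₁ (by positivity) ha₁0.le) (by positivity)
      have heq : (1728 * K / (θ ^ 3 * s ^ 2)) * (1 / (s * θ / 4)) = 6912 * K / (θ ^ 4 * s ^ 3) := by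
        field_simp; ring
      simp only [Pi.mul_apply, Pi.sub_apply] at hmono
      linarith
    have hP2 : (∫ a in a₁..1, (Real.exp (-(s * hSlab d a)) - Real.exp (-(s * θ * a))))
        ≤ 216 / (θ ^ 3 * a₁ ^ 3 * s ^ 3) := by
      have hpt : ∀ a ∈ Set.Icc a₁ 1,
          Real.exp (-(s * hSlab d a)) - Real.exp (-(s * θ * a)) ≤ Real.exp (-(s * m)) := by
        intro a ha
        have h1 : Real.exp (-(s * hSlab d a)) ≤ Real.exp (-(s * m)) := by
          apply Real.exp_le_exp.mpr
          have := hm_le a ha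
          nlinarith
        nlinarith [Real.exp_pos (-(s * θ * a))]
      have hmono := intervalIntegral.integral_mono_on (μ := volume) ha₁1
        ((conte1.sub conte2).intervalIntegrable a₁ 1)
        (intervalIntegrable_const) hpt
      rw [intervalIntegral.integral_const] at hmono
      have hsm : Real.exp (-(s * m)) ≤ 27 / (s * m) ^ 3 := by
        have := aux_exp_neg_le 3 (by positivity : (0:ℝ) < s * m)
        push_cast at this
        convert this using 2
        norm_num
      have heq : 27 / (s * m) ^ 3 = 216 / (θ ^ 3 * a₁ ^ 3 * s ^ 3) := by
        rw [hmdef]; field_simp; ring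
      calc (∫ a in a₁..1, (Real.exp (-(s * hSlab d a)) - Real.exp (-(s * θ * a))))
          ≤ (1 - a₁) • Real.exp (-(s * m)) := hmono
        _ ≤ Real.exp (-(s * m)) := by
            rw [smul_eq_mul]
            nlinarith [Real.exp_pos (-(s * m)), ha₁0]
        _ ≤ 27 / (s * m) ^ 3 := hsm
        _ = 216 / (θ ^ 3 * a₁ ^ 3 * s ^ 3) := heq
    have : D₁ / s ^ 3 = 6912 * K / (θ ^ 4 * s ^ 3) + 216 / (θ ^ 3 * a₁ ^ 3 * s ^ 3) := by
      rw [hD₁def]; field_simp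
    linarith
  -- difference of main integrals
  have hdiff : |(∫ a in (0:ℝ)..1, Real.exp (-(s * hSlab d a)) * (α₀ + hSlab d a) ^ ℓ)
      - (∫ a in (0:ℝ)..1, Real.exp (-(s * θ * a)) * (α₀ ^ ℓ + L * (θ * a)))|
      ≤ B * (D₁ / s ^ 3) + C₅ * (32 / (θ ^ 3 * s ^ 3)) := by
    rw [← intervalIntegral.integral_sub (contG.intervalIntegrable 0 1)
      (contG₃.intervalIntegrable 0 1)]
    have habs := intervalIntegral.abs_integral_le_integral_abs (μ := volume)
      (f := fun a => Real.exp (-(s * hSlab d a)) * (α₀ + hSlab d a) ^ ℓ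
        - Real.exp (-(s * θ * a)) * (α₀ ^ ℓ + L * (θ * a))) zero_le_one
    have hpt : ∀ a ∈ Set.Icc (0:ℝ) 1,
        |Real.exp (-(s * hSlab d a)) * (α₀ + hSlab d a) ^ ℓ
          - Real.exp (-(s * θ * a)) * (α₀ ^ ℓ + L * (θ * a))|
        ≤ B * (Real.exp (-(s * hSlab d a)) - Real.exp (-(s * θ * a)))
          + C₅ * (a ^ 2 * Real.exp (-(s * θ * a))) := by
      intro a ha
      exact aux_pointwise ℓ α₀ θ L M K (hSlab d a) s a hα₀ hθ hs0.le ha.1 ha.2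
        (hpos a ha) (hle a ha) hL (hMt' a ha) hM0 (hge a ha) hK.le
    have hmono := intervalIntegral.integral_mono_on (μ := volume) zero_le_one
      ((contG.sub contG₃).abs.intervalIntegrable 0 1)
      (((continuous_const.mul (conte1.sub conte2)).add
        (continuous_const.mul ((continuous_pow 2).mul conte2))).intervalIntegrable 0 1) hpt
    have hsplit : (∫ a in (0:ℝ)..1,
        (B * (Real.exp (-(s * hSlab d a)) - Real.exp (-(s * θ * a)))
          + C₅ * (a ^ 2 * Real.exp (-(s * θ * a)))))
        = B * (∫ a in (0:ℝ)..1, (Real.exp (-(s * hSlab d a)) - Real.exp (-(s * θ * a))))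
          + C₅ * (∫ a in (0:ℝ)..1, a ^ 2 * Real.exp (-(s * θ * a))) := by
      rw [intervalIntegral.integral_add
        (f := fun a => B * (Real.exp (-(s * hSlab d a)) - Real.exp (-(s * θ * a))))
        (g := fun a => C₅ * (a ^ 2 * Real.exp (-(s * θ * a))))
        ((continuous_const.mul (conte1.sub conte2)).intervalIntegrable 0 1)
        ((continuous_const.mul ((continuous_pow 2).mul conte2)).intervalIntegrable 0 1),
        intervalIntegral.integral_const_mul, intervalIntegral.integral_const_mul]
    have hfinal : B * (∫ a in (0:ℝ)..1, (Real.exp (-(s * hSlab d a)) - Real.exp (-(s * θ * a))))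
          + C₅ * (∫ a in (0:ℝ)..1, a ^ 2 * Real.exp (-(s * θ * a)))
        ≤ B * (D₁ / s ^ 3) + C₅ * (32 / (θ ^ 3 * s ^ 3)) := by
      have g1 := mul_le_mul_of_nonneg_left hJ₁ hB.le
      have g2 := mul_le_mul_of_nonneg_left hJ₂ hC₅0
      linarith
    calc |∫ a in (0:ℝ)..1, (Real.exp (-(s * hSlab d a)) * (α₀ + hSlab d a) ^ ℓ
          - Real.exp (-(s * θ * a)) * (α₀ ^ ℓ + L * (θ * a)))|
        ≤ ∫ a in (0:ℝ)..1, |Real.exp (-(s * hSlab d a)) * (α₀ + hSlab d a) ^ ℓ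
          - Real.exp (-(s * θ * a)) * (α₀ ^ ℓ + L * (θ * a))| := habs
      _ ≤ ∫ a in (0:ℝ)..1,
          (B * (Real.exp (-(s * hSlab d a)) - Real.exp (-(s * θ * a)))
            + C₅ * (a ^ 2 * Real.exp (-(s * θ * a)))) := hmono
      _ = _ := hsplit
      _ ≤ B * (D₁ / s ^ 3) + C₅ * (32 / (θ ^ 3 * s ^ 3)) := hfinal
  -- exact value of the model integral
  have hsθ0 : (0:ℝ) < s * θ := by positivity
  have hIG₃ : (∫ a in (0:ℝ)..1, Real.exp (-(s * θ * a)) * (α₀ ^ ℓ + L * (θ * a)))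
      = α₀ ^ ℓ * ((1 - Real.exp (-(s * θ))) / (s * θ))
        + L * θ * ((1 - (1 + s * θ) * Real.exp (-(s * θ))) / (s * θ) ^ 2) := by
    have h1 : (fun a : ℝ => Real.exp (-(s * θ * a)) * (α₀ ^ ℓ + L * (θ * a)))
        = fun a : ℝ => α₀ ^ ℓ * Real.exp (-(s * θ * a))
          + (L * θ) * (a * Real.exp (-(s * θ * a))) := by
      funext a; ring
    have contae2 : Continuous fun a : ℝ => a * Real.exp (-(s * θ * a)) :=
      continuous_id.mul conte2
    rw [h1, intervalIntegral.integral_add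
      (f := fun a => α₀ ^ ℓ * Real.exp (-(s * θ * a)))
      (g := fun a => (L * θ) * (a * Real.exp (-(s * θ * a))))
      ((continuous_const.mul conte2).intervalIntegrable 0 1)
      ((continuous_const.mul contae2).intervalIntegrable 0 1),
      intervalIntegral.integral_const_mul, intervalIntegral.integral_const_mul,
      aux_integral_exp_neg (s * θ) 1 hsθ0.ne', aux_integral_mul_exp_neg (s * θ) hsθ0.ne']
    norm_num
  -- model integral close to target
  have hE3 : |θ * (∫ a in (0:ℝ)..1, Real.exp (-(s * θ * a)) * (α₀ ^ ℓ + L * (θ * a)))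
      - (α₀ ^ ℓ / s + L / s ^ 2)| ≤ DE / s ^ 3 := by
    set E := Real.exp (-(s * θ)) with hEdef
    have hE0 : 0 < E := Real.exp_pos _
    have hval : θ * (∫ a in (0:ℝ)..1, Real.exp (-(s * θ * a)) * (α₀ ^ ℓ + L * (θ * a)))
        - (α₀ ^ ℓ / s + L / s ^ 2) = -(α₀ ^ ℓ * E / s) - L * (1 + s * θ) * E / s ^ 2 := by
      rw [hIG₃]
      field_simp
      ring
    have hEbd3 : E ≤ 27 / (s * θ) ^ 3 := by
      have := aux_exp_neg_le 3 hsθ0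
      push_cast at this
      convert this using 2
      norm_num
    have hEbd4 : E ≤ 256 / (s * θ) ^ 4 := by
      have := aux_exp_neg_le 4 hsθ0
      push_cast at this
      convert this using 2
      norm_num
    have k1 : α₀ ^ ℓ * E / s ≤ 27 * α₀ ^ ℓ / (θ ^ 3 * s ^ 3) := by
      calc α₀ ^ ℓ * E / s ≤ α₀ ^ ℓ * E := div_le_self (by positivity) hs
        _ ≤ α₀ ^ ℓ * (27 / (s * θ) ^ 3) := mul_le_mul_of_nonneg_left hEbd3 (by positivity)
        _ = 27 * α₀ ^ ℓ / (θ ^ 3 * s ^ 3) := by field_simp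
    have k2 : L * (1 + s * θ) * E / s ^ 2 ≤ 283 * L / (θ ^ 3 * s ^ 3) := by
      have hsq : (1:ℝ) ≤ s ^ 2 := by nlinarith
      have e1 : L * E ≤ L * (27 / (s * θ) ^ 3) := mul_le_mul_of_nonneg_left hEbd3 hL
      have e2 : L * (s * θ * E) ≤ L * (s * θ * (256 / (s * θ) ^ 4)) := by
        apply mul_le_mul_of_nonneg_left _ hL
        exact mul_le_mul_of_nonneg_left hEbd4 hsθ0.le
      have e3 : s * θ * (256 / (s * θ) ^ 4) = 256 / (s * θ) ^ 3 := by
        field_simp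
      rw [e3] at e2
      calc L * (1 + s * θ) * E / s ^ 2 ≤ L * (1 + s * θ) * E := by
            apply div_le_self _ hsq
            have : (0:ℝ) ≤ 1 + s * θ := by positivity
            positivity
        _ = L * E + L * (s * θ * E) := by ring
        _ ≤ L * (27 / (s * θ) ^ 3) + L * (256 / (s * θ) ^ 3) := by linarith
        _ = 283 * L / (θ ^ 3 * s ^ 3) := by field_simp; ring
    rw [hval]
    have habs : |-(α₀ ^ ℓ * E / s) - L * (1 + s * θ) * E / s ^ 2|
        = α₀ ^ ℓ * E / s + L * (1 + s * θ) * E / s ^ 2 := by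
      rw [show -(α₀ ^ ℓ * E / s) - L * (1 + s * θ) * E / s ^ 2
          = -((α₀ ^ ℓ * E / s) + L * (1 + s * θ) * E / s ^ 2) by ring, abs_neg,
        abs_of_nonneg]
      have h1 : (0:ℝ) ≤ 1 + s * θ := by positivity
      positivity
    rw [habs]
    have hDEeq : DE / s ^ 3 = 27 * α₀ ^ ℓ / (θ ^ 3 * s ^ 3) + 283 * L / (θ ^ 3 * s ^ 3) := by
      rw [hDEdef]; field_simp
    linarith
  -- assemble
  have hT : |θ * (∫ a in (0:ℝ)..1, Real.exp (-(s * hSlab d a)) * (α₀ + hSlab d a) ^ ℓ)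
      - (α₀ ^ ℓ / s + L / s ^ 2)|
      ≤ (θ * (B * D₁ + C₅ * (32 / θ ^ 3)) + DE) / s ^ 3 := by
    set IG := ∫ a in (0:ℝ)..1, Real.exp (-(s * hSlab d a)) * (α₀ + hSlab d a) ^ ℓ with hIGdef
    set IG₃ := ∫ a in (0:ℝ)..1, Real.exp (-(s * θ * a)) * (α₀ ^ ℓ + L * (θ * a)) with hIG₃def
    have t1 : θ * IG - (α₀ ^ ℓ / s + L / s ^ 2)
        = θ * (IG - IG₃) + (θ * IG₃ - (α₀ ^ ℓ / s + L / s ^ 2)) := by ring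
    have t2 : |θ * (IG - IG₃)| ≤ θ * (B * (D₁ / s ^ 3) + C₅ * (32 / (θ ^ 3 * s ^ 3))) := by
      rw [abs_mul, abs_of_nonneg hθ.le]
      exact mul_le_mul_of_nonneg_left hdiff hθ.le
    have t3 : θ * (B * (D₁ / s ^ 3) + C₅ * (32 / (θ ^ 3 * s ^ 3))) + DE / s ^ 3
        = (θ * (B * D₁ + C₅ * (32 / θ ^ 3)) + DE) / s ^ 3 := by
      field_simp
    calc |θ * IG - (α₀ ^ ℓ / s + L / s ^ 2)|
        = |θ * (IG - IG₃) + (θ * IG₃ - (α₀ ^ ℓ / s + L / s ^ 2))| := by rw [t1]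
      _ ≤ |θ * (IG - IG₃)| + |θ * IG₃ - (α₀ ^ ℓ / s + L / s ^ 2)| := abs_add_le _ _
      _ ≤ θ * (B * (D₁ / s ^ 3) + C₅ * (32 / (θ ^ 3 * s ^ 3))) + DE / s ^ 3 :=
          add_le_add t2 hE3
      _ = (θ * (B * D₁ + C₅ * (32 / θ ^ 3)) + DE) / s ^ 3 := t3
  have hCnn : (0:ℝ) ≤ θ * (B * D₁ + C₅ * (32 / θ ^ 3)) + DE := by positivity
  have hrpow : (θ * (B * D₁ + C₅ * (32 / θ ^ 3)) + DE) / s ^ 3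
      ≤ (θ * (B * D₁ + C₅ * (32 / θ ^ 3)) + DE) * s ^ (ε - 3) := by
    have h1 : s ^ ((-3:ℝ)) = (s ^ (3:ℕ))⁻¹ := by
      rw [show ((-3:ℝ)) = -((3:ℕ):ℝ) by norm_num, Real.rpow_neg hs0.le, Real.rpow_natCast]
    have h2 : s ^ ((-3:ℝ)) ≤ s ^ (ε - 3) :=
      Real.rpow_le_rpow_of_exponent_le hs (by linarith [hε.1])
    calc (θ * (B * D₁ + C₅ * (32 / θ ^ 3)) + DE) / s ^ 3
        = (θ * (B * D₁ + C₅ * (32 / θ ^ 3)) + DE) * s ^ ((-3:ℝ)) := by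
          rw [h1, div_eq_mul_inv]
      _ ≤ (θ * (B * D₁ + C₅ * (32 / θ ^ 3)) + DE) * s ^ (ε - 3) :=
          mul_le_mul_of_nonneg_left h2 hCnn
  exact le_trans hT hrpow
end

section
/- Fix $k \in \mathbb{N}$, $d \geq 2$, $\beta \in \mathbb{R}$, and $f_0 > 0$. For $t > 0$ define $r_t \geq 0$ by $t f_0 \theta_d r_t^d = \max(\log t + (k-1)\log\log t + \beta, 0)$, and let $Z_t$ be a Poisson random variable with mean $t f_0 \theta_d r_t^d$. Then as $t \to \infty$, with $j := k-1$, $$t\, \Pr[Z_t < k] = \frac{e^{-\beta}}{j!}\Big(1 + \frac{j^2 \log\log t}{\log t} + \frac{j(1+\beta)}{\log t} + O\Big(\Big(\frac{\log\log t}{\log t}\Big)^2\Big)\Big).$$ -/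
open MeasureTheory Metric Set Real

open Filter in
private lemma pow_one_add_le (x : ℝ) (h0 : 0 ≤ x) (h1 : x ≤ 1) :
    ∀ n : ℕ, (1 + x)^n ≤ 1 + n*x + n*2^n*x^2 := by
  intro n
  induction n with
  | zero => norm_num
  | succ n ih =>
    have hn : (n:ℝ) ≤ 2^n := by exact_mod_cast (Nat.lt_two_pow_self (n := n)).le
    have h2 : (0:ℝ) < 2^n := by positivity
    have hx3 : x^3 ≤ x^2 := by nlinarith
    have step : (1+x)^(n+1) ≤ (1 + n*x + n*2^n*x^2) * (1+x) := by
      calc (1+x)^(n+1) = (1+x)^n * (1+x) := by ring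
      _ ≤ _ := mul_le_mul_of_nonneg_right ih (by linarith)
    have hcast : ((n+1 : ℕ):ℝ) = (n:ℝ)+1 := by push_cast; ring
    rw [hcast]
    have h3 : (0:ℝ) ≤ (n:ℝ)*2^n := by positivity
    have h4 : ((n:ℝ)+1)*2^(n+1)*x^2 = 2*((n:ℝ)+1)*(2^n*x^2) := by
      rw [pow_succ]; ring
    nlinarith [mul_le_mul_of_nonneg_left hx3 h3, sq_nonneg x,
      mul_le_mul_of_nonneg_right hn (sq_nonneg x)]

private lemma binom_lower (x : ℝ) (h0 : -2 ≤ x) (n : ℕ) : 1 + (n:ℝ)*x ≤ (1+x)^n :=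
  one_add_mul_le_pow h0 n

set_option maxHeartbeats 2000000 in
private lemma core_bound (q : ℕ) (L a : ℝ) (hL : 1 ≤ L) (ha1 : 1 ≤ a) (haL : a ≤ L) :
    |(∑ m ∈ Finset.range (q+2), (L+a)^m / ((Nat.factorial m : ℝ) * L^(q+1)))
      - (1/(Nat.factorial (q+1) : ℝ) * (1 + ((q:ℝ)+1)*a/L + ((q:ℝ)+1)/L))|
    ≤ 3*((q:ℝ)+1)*2^(q+1)*a^2 / L^2 := by
  have hL0 : (0:ℝ) < L := by linarith
  have ha0 : (0:ℝ) < a := by linarith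
  have hLne : L ≠ 0 := ne_of_gt hL0
  set x : ℝ := a / L with hxdef
  have hx0 : 0 < x := div_pos ha0 hL0
  have hx1 : x ≤ 1 := (div_le_one hL0).mpr haL
  have hLa : L + a = L * (1 + x) := by
    rw [hxdef]
    field_simp
  have hfq : (0:ℝ) < (Nat.factorial q : ℝ) := by exact_mod_cast (Nat.factorial_pos q)
  have hfq1 : (0:ℝ) < (Nat.factorial (q+1) : ℝ) := by exact_mod_cast (Nat.factorial_pos (q+1))
  have hfq1' : (1:ℝ) ≤ (Nat.factorial (q+1) : ℝ) := by
    exact_mod_cast Nat.one_le_iff_ne_zero.mpr (Nat.factorial_pos (q+1)).ne'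
  have hfqge : (1:ℝ) ≤ (Nat.factorial q : ℝ) := by
    exact_mod_cast Nat.one_le_iff_ne_zero.mpr (Nat.factorial_pos q).ne'
  -- split top two terms
  rw [Finset.sum_range_succ, Finset.sum_range_succ]
  have htop : (L+a)^(q+1) / ((Nat.factorial (q+1) : ℝ) * L^(q+1))
      = (1+x)^(q+1) / (Nat.factorial (q+1) : ℝ) := by
    rw [hLa, mul_pow, mul_comm ((Nat.factorial (q+1) : ℝ)) (L^(q+1))]
    exact mul_div_mul_left _ _ (by positivity)
  have hmid : (L+a)^q / ((Nat.factorial q : ℝ) * L^(q+1))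
      = (1+x)^q / ((Nat.factorial q : ℝ) * L) := by
    rw [hLa, mul_pow, pow_succ,
      show (Nat.factorial q : ℝ) * (L^q*L) = L^q * ((Nat.factorial q : ℝ)*L) by ring]
    exact mul_div_mul_left _ _ (by positivity)
  rw [htop, hmid]
  -- target split
  have hT : (1/(Nat.factorial (q+1) : ℝ) * (1 + ((q:ℝ)+1)*a/L + ((q:ℝ)+1)/L))
      = (1 + ((q:ℝ)+1)*x)/(Nat.factorial (q+1) : ℝ) + 1/((Nat.factorial q : ℝ) * L) := by
    have hfs : (Nat.factorial (q+1) : ℝ) = ((q:ℝ)+1) * (Nat.factorial q : ℝ) := by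
      rw [Nat.factorial_succ]; push_cast; ring
    rw [hfs, hxdef]
    field_simp
  rw [hT]
  -- tail bound
  have htail_nonneg : 0 ≤ ∑ m ∈ Finset.range q, (L+a)^m / ((Nat.factorial m : ℝ) * L^(q+1)) := by
    apply Finset.sum_nonneg
    intro m _
    positivity
  have htail_le : (∑ m ∈ Finset.range q, (L+a)^m / ((Nat.factorial m : ℝ) * L^(q+1)))
      ≤ (q:ℝ) * (2^q / L^2) := by
    have hterm : ∀ m ∈ Finset.range q, (L+a)^m / ((Nat.factorial m : ℝ) * L^(q+1)) ≤ 2^q / L^2 := by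
      intro m hm
      have hmq : m < q := Finset.mem_range.mp hm
      have h1 : (L+a)^m ≤ 2^q * L^m := by
        calc (L+a)^m ≤ (2*L)^m := by
              apply pow_le_pow_left₀ (by linarith) (by linarith)
        _ = 2^m * L^m := mul_pow 2 L m
        _ ≤ 2^q * L^m := by
              apply mul_le_mul_of_nonneg_right _ (by positivity)
              exact pow_le_pow_right₀ (by norm_num) (by omega)
      have h2 : L^m * L^2 ≤ (Nat.factorial m : ℝ) * L^(q+1) := by
        have e : L^(q+1) = L^m * L^(q+1-m) := by
          rw [← pow_add]
          congr 1
          omega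
        have h3 : L^2 ≤ L^(q+1-m) := pow_le_pow_right₀ hL (by omega)
        have h4 : (1:ℝ) ≤ (Nat.factorial m : ℝ) := by
          exact_mod_cast Nat.one_le_iff_ne_zero.mpr (Nat.factorial_pos m).ne'
        calc L^m * L^2 ≤ L^m * L^(q+1-m) := by
              apply mul_le_mul_of_nonneg_left h3 (by positivity)
        _ = L^(q+1) := e.symm
        _ ≤ (Nat.factorial m : ℝ) * L^(q+1) := by
              nlinarith [pow_pos hL0 (q+1)]
      calc (L+a)^m / ((Nat.factorial m : ℝ) * L^(q+1))
          ≤ (2^q * L^m) / (L^m * L^2) := by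
            apply div_le_div₀ (by positivity) h1 (by positivity) h2
      _ = 2^q / L^2 := by
            rw [mul_comm ((2:ℝ)^q) (L^m)]
            exact mul_div_mul_left _ _ (by positivity)
    calc (∑ m ∈ Finset.range q, (L+a)^m / ((Nat.factorial m : ℝ) * L^(q+1)))
        ≤ ∑ _m ∈ Finset.range q, (2^q / L^2 : ℝ) := Finset.sum_le_sum hterm
    _ = (q:ℝ) * (2^q / L^2) := by
          rw [Finset.sum_const, Finset.card_range, nsmul_eq_mul]
  -- error bounds on top terms
  have hb1 : |(1+x)^(q+1) - (1 + ((q:ℝ)+1)*x)| ≤ ((q:ℝ)+1)*2^(q+1)*x^2 := by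
    have hup := pow_one_add_le x hx0.le hx1 (q+1)
    have hlo := binom_lower x (by linarith) (q+1)
    push_cast at hup hlo
    rw [abs_le]
    constructor
    · nlinarith [sq_nonneg x]
    · nlinarith [sq_nonneg x]
  have hb2 : |(1+x)^q - 1| ≤ 2*(q:ℝ)*2^q*x := by
    have hup := pow_one_add_le x hx0.le hx1 q
    have hlo : (1:ℝ) ≤ (1+x)^q := by
      calc (1:ℝ) = 1^q := (one_pow q).symm
      _ ≤ (1+x)^q := pow_le_pow_left₀ (by norm_num) (by linarith) q
    have h12 : (1:ℝ) ≤ 2^q := one_le_pow₀ (by norm_num)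
    push_cast at hup
    have hq0 : (0:ℝ) ≤ (q:ℝ) := Nat.cast_nonneg q
    have hxx : x^2 ≤ x := by nlinarith
    have e1 : (q:ℝ)*2^q*x^2 ≤ (q:ℝ)*2^q*x := mul_le_mul_of_nonneg_left hxx (by positivity)
    have e0 : (q:ℝ) ≤ (q:ℝ)*2^q := by nlinarith
    have e2 : (q:ℝ)*x ≤ (q:ℝ)*2^q*x := mul_le_mul_of_nonneg_right e0 hx0.le
    have e3 : (0:ℝ) ≤ 2*(q:ℝ)*2^q*x := by positivity
    rw [abs_le]
    constructor
    · linarith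
    · linarith
  -- rewrite the two top error terms
  have hxL2 : x / L = a / L^2 := by rw [hxdef, div_div, sq]
  have hx2L : x^2 = a^2 / L^2 := by rw [hxdef, div_pow]
  have hABS2 : |(1+x)^q / ((Nat.factorial q : ℝ) * L) - 1/((Nat.factorial q : ℝ) * L)|
      ≤ 2*(q:ℝ)*2^q * (a / L^2) := by
    rw [div_sub_div_same, abs_div,
      abs_of_pos (show (0:ℝ) < (Nat.factorial q : ℝ)*L by positivity), ← hxL2]
    calc |(1+x)^q - 1| / ((Nat.factorial q : ℝ)*L) ≤ (2*(q:ℝ)*2^q*x) / (1*L) := by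
          apply div_le_div₀ (by positivity) hb2 (by linarith) ?_
          nlinarith
    _ = 2*(q:ℝ)*2^q * (x/L) := by ring
  have hABS1 : |(1+x)^(q+1)/(Nat.factorial (q+1) : ℝ)
        - (1 + ((q:ℝ)+1)*x)/(Nat.factorial (q+1) : ℝ)|
      ≤ ((q:ℝ)+1)*2^(q+1) * (a^2/L^2) := by
    rw [div_sub_div_same, abs_div, abs_of_pos hfq1, ← hx2L]
    calc |(1+x)^(q+1) - (1 + ((q:ℝ)+1)*x)| / (Nat.factorial (q+1) : ℝ)
        ≤ (((q:ℝ)+1)*2^(q+1)*x^2) / 1 := div_le_div₀ (by positivity) hb1 one_pos hfq1'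
    _ = ((q:ℝ)+1)*2^(q+1) * x^2 := by ring
  have haa : a ≤ a^2 := by nlinarith
  have h1a : (1:ℝ) ≤ a^2 := by nlinarith
  have key : (q:ℝ)*2^q + 2*(q:ℝ)*2^q*a + ((q:ℝ)+1)*2^(q+1)*a^2
      ≤ 3*((q:ℝ)+1)*2^(q+1)*a^2 := by
    rw [pow_succ]
    nlinarith [mul_le_mul_of_nonneg_left haa (show (0:ℝ) ≤ 2*(q:ℝ)*2^q by positivity),
      mul_le_mul_of_nonneg_left h1a (show (0:ℝ) ≤ (q:ℝ)*2^q by positivity),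
      (show (0:ℝ) ≤ 2^q*a^2 by positivity), (show (0:ℝ) ≤ (q:ℝ)*2^q*a^2 by positivity)]
  have hsplit : ∀ T A B A' B' : ℝ, (T + A + B) - (B' + A') = T + (A - A') + (B - B') := by
    intros; ring
  rw [hsplit]
  calc |(∑ m ∈ Finset.range q, (L+a)^m / ((Nat.factorial m : ℝ) * L^(q+1)))
        + ((1+x)^q / ((Nat.factorial q : ℝ) * L) - 1/((Nat.factorial q : ℝ) * L))
        + ((1+x)^(q+1)/(Nat.factorial (q+1) : ℝ)
            - (1 + ((q:ℝ)+1)*x)/(Nat.factorial (q+1) : ℝ))|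
      ≤ |∑ m ∈ Finset.range q, (L+a)^m / ((Nat.factorial m : ℝ) * L^(q+1))|
        + |(1+x)^q / ((Nat.factorial q : ℝ) * L) - 1/((Nat.factorial q : ℝ) * L)|
        + |(1+x)^(q+1)/(Nat.factorial (q+1) : ℝ)
            - (1 + ((q:ℝ)+1)*x)/(Nat.factorial (q+1) : ℝ)| := abs_add_three _ _ _
  _ ≤ (q:ℝ) * (2^q / L^2) + 2*(q:ℝ)*2^q * (a / L^2) + ((q:ℝ)+1)*2^(q+1) * (a^2/L^2) := by
      rw [abs_of_nonneg htail_nonneg]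
      exact add_le_add (add_le_add htail_le hABS2) hABS1
  _ = ((q:ℝ)*2^q + 2*(q:ℝ)*2^q*a + ((q:ℝ)+1)*2^(q+1)*a^2) / L^2 := by ring
  _ ≤ 3*((q:ℝ)+1)*2^(q+1)*a^2 / L^2 := by
      exact div_le_div₀ (by positivity) key (by positivity) le_rfl



set_option maxHeartbeats 2000000 in
/-- with `r_t` defined by `t f₀ θ_d r_t^d = max(log t + (k-1) log log t + β, 0)`
and `Z_t` Poisson with mean `t f₀ θ_d r_t^d`, as `t → ∞`, with `j = k-1`,
`t P[Z_t < k] = (e^{-β}/j!) (1 + j² loglog t/log t + j(1+β)/log t + O((loglog t/log t)²))`. -/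
theorem poisson_undershoot_asymptotics (k : ℕ) (hk : 1 ≤ k) (d : ℕ) (hd : 2 ≤ d)
    (β f₀ : ℝ) (hf₀ : 0 < f₀) (r : ℝ → ℝ)
    (hr : ∀ t > (0:ℝ), 0 ≤ r t ∧
      t * f₀ * ubv d * (r t)^d
        = max (Real.log t + ((k:ℝ) - 1) * Real.log (Real.log t) + β) 0) :
    ∃ C t₀ : ℝ, ∀ t ≥ t₀,
      |t * (∑ m ∈ Finset.range k,
            Real.exp (-(t * f₀ * ubv d * (r t)^d)) * (t * f₀ * ubv d * (r t)^d)^m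
              / (Nat.factorial m : ℝ))
        - Real.exp (-β) / (Nat.factorial (k-1) : ℝ) *
            (1 + ((k:ℝ) - 1)^2 * Real.log (Real.log t) / Real.log t
               + ((k:ℝ) - 1) * (1 + β) / Real.log t)|
      ≤ C * (Real.log (Real.log t) / Real.log t)^2 := by
  rcases eq_or_lt_of_le hk with hk1 | hk2
  · -- k = 1
    obtain rfl : k = 1 := hk1.symm
    refine ⟨0, Real.exp (1 + |β|), fun t ht => ?_⟩
    have ht0 : (0:ℝ) < t := lt_of_lt_of_le (Real.exp_pos _) ht
    have hLβ : 1 + |β| ≤ Real.log t := (Real.le_log_iff_exp_le ht0).mpr ht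
    have hmax : t * f₀ * ubv d * (r t)^d = Real.log t + β := by
      rw [(hr t ht0).2]
      push_cast
      rw [show ((1:ℝ) - 1) * Real.log (Real.log t) = 0 by ring]
      rw [max_eq_left (by nlinarith [abs_nonneg β, neg_abs_le β])]
      ring
    rw [hmax]
    have hsum : t * (∑ m ∈ Finset.range 1,
        Real.exp (-(Real.log t + β)) * (Real.log t + β)^m / (Nat.factorial m : ℝ))
        = Real.exp (-β) := by
      rw [Finset.sum_range_one]
      simp only [pow_zero, Nat.factorial_zero, Nat.cast_one, mul_one, div_one]
      rw [show -(Real.log t + β) = -β + -Real.log t by ring, Real.exp_add,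
        Real.exp_neg (Real.log t), Real.exp_log ht0]
      field_simp
    rw [hsum]
    norm_num
  · -- k ≥ 2
    obtain ⟨q, rfl⟩ : ∃ q, k = q + 2 := ⟨k - 2, by omega⟩
    have hcast : ((q+2 : ℕ) : ℝ) - 1 = (q:ℝ) + 1 := by push_cast; ring
    set M : ℝ := (q:ℝ) + 1 + |β| with hMdef
    set C : ℝ := Real.exp (-β) * (3*((q:ℝ)+1)*2^(q+1)*M^2) with hCdef
    refine ⟨C, ?_⟩
    rw [← Filter.eventually_atTop]
    have hlog := Real.tendsto_log_atTop
    have hcond : ∀ᶠ L in Filter.atTop, 1 ≤ L ∧ (1+|β|) ≤ Real.log L ∧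
        ((q:ℝ)+1) * Real.log L + β ≤ L := by
      have hlittle := Real.isLittleO_log_id_atTop.def
        (c := 1/(2*((q:ℝ)+1))) (by positivity)
      filter_upwards [hlittle, Filter.eventually_ge_atTop (1:ℝ),
        Filter.eventually_ge_atTop (2*β),
        hlog.eventually (Filter.eventually_ge_atTop (1+|β|))] with L h1 h2 h3 h4
      refine ⟨h2, h4, ?_⟩
      simp only [Real.norm_eq_abs, id] at h1
      have hla : Real.log L ≤ |Real.log L| := le_abs_self _
      rw [abs_of_nonneg (by linarith : (0:ℝ) ≤ L)] at h1
      have hq0 : (0:ℝ) < (q:ℝ)+1 := by positivity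
      have h5 : ((q:ℝ)+1) * |Real.log L| ≤ ((q:ℝ)+1) * (1/(2*((q:ℝ)+1)) * L) :=
        mul_le_mul_of_nonneg_left h1 hq0.le
      have h6 : ((q:ℝ)+1) * (1/(2*((q:ℝ)+1)) * L) = L/2 := by field_simp
      nlinarith [mul_le_mul_of_nonneg_left hla hq0.le]
    filter_upwards [hlog.eventually hcond, Filter.eventually_ge_atTop (1:ℝ)] with t hc ht1
    obtain ⟨hL1, hl1, hqL⟩ := hc
    have ht0 : (0:ℝ) < t := lt_of_lt_of_le one_pos ht1
    set L : ℝ := Real.log t with hLdef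
    set l : ℝ := Real.log L with hldef
    set a : ℝ := ((q:ℝ)+1) * l + β with hadef
    have hl0 : (0:ℝ) ≤ l := by nlinarith [abs_nonneg β]
    have ha1 : (1:ℝ) ≤ a := by
      rw [hadef]
      nlinarith [neg_abs_le β, (Nat.cast_nonneg q : (0:ℝ) ≤ (q:ℝ))]
    have haL : a ≤ L := hqL
    -- rewrite the Poisson mean
    have hν : t * f₀ * ubv d * (r t)^d = L + a := by
      rw [(hr t ht0).2, hcast, max_eq_left (by nlinarith : (0:ℝ) ≤ L + ((q:ℝ)+1) * l + β)]
      rw [hadef]; ring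
    rw [hν]
    -- key exponential identity
    have hL0 : (0:ℝ) < L := by linarith
    have hkey : Real.exp (-(L + a)) = Real.exp (-β) / (t * L^(q+1)) := by
      rw [hadef, show -(L + (((q:ℝ)+1) * l + β)) = -β + -L + -(((q+1:ℕ):ℝ) * l) by push_cast; ring]
      rw [Real.exp_add, Real.exp_add, Real.exp_neg L, Real.exp_neg (((q+1:ℕ):ℝ) * l),
        Real.exp_log ht0, Real.exp_nat_mul, hldef, Real.exp_log hL0]
      rw [div_eq_mul_inv, mul_inv]
      ring
    have hfm : ∀ m : ℕ, ((Nat.factorial m : ℝ)) ≠ 0 := fun m => by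
      exact_mod_cast (Nat.factorial_pos m).ne'
    have hsum : t * (∑ m ∈ Finset.range (q+2),
        Real.exp (-(L + a)) * (L + a)^m / (Nat.factorial m : ℝ))
        = Real.exp (-β) * (∑ m ∈ Finset.range (q+2),
            (L+a)^m / ((Nat.factorial m : ℝ) * L^(q+1))) := by
      rw [Finset.mul_sum, Finset.mul_sum]
      refine Finset.sum_congr rfl fun m _ => ?_
      rw [hkey]
      field_simp
    have hidx : q + 2 - 1 = q + 1 := by omega
    have htar : Real.exp (-β) / (Nat.factorial (q+1) : ℝ) *
          (1 + ((q:ℝ)+1)^2 * l / L + ((q:ℝ)+1) * (1 + β) / L)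
        = Real.exp (-β) * (1/(Nat.factorial (q+1) : ℝ) *
            (1 + ((q:ℝ)+1)*a/L + ((q:ℝ)+1)/L)) := by
      rw [hadef]
      field_simp
      ring
    rw [hidx, hcast, hsum, htar, ← mul_sub, abs_mul, abs_of_pos (Real.exp_pos (-β))]
    have hcore := core_bound q L a hL1 ha1 haL
    have hl1' : (1:ℝ) ≤ l := by linarith [abs_nonneg β]
    have haM : a ≤ M * l := by
      have hb1 : |β| * 1 ≤ |β| * l := mul_le_mul_of_nonneg_left hl1' (abs_nonneg β)
      have hb2 : β ≤ |β| * l := by linarith [le_abs_self β]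
      rw [hadef, hMdef]
      ring_nf
      nlinarith
    have haM2 : a^2 ≤ M^2 * l^2 := by
      have := pow_le_pow_left₀ (by linarith : (0:ℝ) ≤ a) haM 2
      calc a^2 ≤ (M*l)^2 := this
      _ = M^2 * l^2 := mul_pow M l 2
    calc Real.exp (-β) * |(∑ m ∈ Finset.range (q+2),
            (L+a)^m / ((Nat.factorial m : ℝ) * L^(q+1)))
          - (1/(Nat.factorial (q+1) : ℝ) * (1 + ((q:ℝ)+1)*a/L + ((q:ℝ)+1)/L))|
        ≤ Real.exp (-β) * (3*((q:ℝ)+1)*2^(q+1)*a^2 / L^2) :=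
          mul_le_mul_of_nonneg_left hcore (Real.exp_pos _).le
    _ ≤ C * (l / L)^2 := by
        rw [hCdef, div_pow]
        have h1 : 3*((q:ℝ)+1)*2^(q+1)*a^2 / L^2 ≤ 3*((q:ℝ)+1)*2^(q+1)*(M^2*l^2) / L^2 := by
          apply div_le_div₀ (by positivity) ?_ (by positivity) le_rfl
          have h2p : (0:ℝ) ≤ 3*((q:ℝ)+1)*2^(q+1) := by positivity
          nlinarith [mul_le_mul_of_nonneg_left haM2 h2p]
        calc Real.exp (-β) * (3*((q:ℝ)+1)*2^(q+1)*a^2 / L^2)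
            ≤ Real.exp (-β) * (3*((q:ℝ)+1)*2^(q+1)*(M^2*l^2) / L^2) :=
              mul_le_mul_of_nonneg_left h1 (Real.exp_pos _).le
        _ = Real.exp (-β) * (3*((q:ℝ)+1)*2^(q+1)*M^2) * (l^2 / L^2) := by ring
end
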